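/- arXiv:1011.0111 — 3 statements merged into one kernel-verified Lean document; each statement's English description precedes it below -/
import Mathlib

section
/- Let P be a probability measure on (Ω^{𝓔,d}, F^{𝓔,d}), let T be a finite (for every ω) {F_t^{𝓔,d}}-stopping time, and let Q be a probability kernel from (Ω^{𝓔,d}, F^{𝓔,d}_T) to (Ω^{𝓔,d}, F^{𝓔,d}). Then there exists a unique probability measure P ⊗_T Q on (Ω^{𝓔,d}, F^{𝓔,d}) such that (a) (P ⊗_T Q)[A] = P[A] for all A ∈ F^{𝓔,d}_T, and (b) for every F ∈ F^{𝓔,d}, the random variable ω ↦ (δ_ω ⊗_{T(ω)} Q(ω,·))[F] is a version of the conditional probability (P ⊗_T Q)[F | F^{𝓔,d}_T]. -/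
open MeasureTheory Filter Set
open scoped ENNReal NNReal Topology

noncomputable section

namespace Mimic

/-- Lebesgue measure on `[0,∞)`, modeled as `ℝ≥0`. -/
def leb : Measure ℝ≥0 := (volume : Measure ℝ).comap (↑·)

variable (E : Type*) [MeasurableSpace E] (V : Type*) [NormedAddCommGroup V]

/-- The space `C_0` of continuous paths `[0,∞) → V` vanishing at `0`, with the
topology of uniform convergence on compact sets (compact-open topology). -/
def C0 : Type _ := {x : C(ℝ≥0, V) // x 0 = 0}

instance : TopologicalSpace (C0 V) := inferInstanceAs (TopologicalSpace {x : C(ℝ≥0, V) // x 0 = 0})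
instance : MeasurableSpace (C0 V) := borel _
instance : BorelSpace (C0 V) := ⟨rfl⟩

variable {E V}

/-- The value of a path in `C0` at time `t`. -/
def C0.eval (x : C0 V) (t : ℝ≥0) : V := x.1 t

/-- The stopping operator `∇(x,t) := x(· ∧ t)` on continuous maps. -/
def stopCM (x : C(ℝ≥0, V)) (t : ℝ≥0) : C(ℝ≥0, V) :=
  x.comp ⟨fun s => min s t, continuous_id.min continuous_const⟩

/-- The stopping operator on `C0`. -/
def stop0 (x : C0 V) (t : ℝ≥0) : C0 V :=
  ⟨stopCM x.1 t, by
    simp only [stopCM, ContinuousMap.comp_apply, ContinuousMap.coe_mk]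
    rw [min_eq_left (zero_le : 0 ≤ t)]
    exact x.2⟩

/-- The difference operator `Δ(x,t) := x(t+·) − x(t)`, valued in `C0`. -/
def delta (x : C(ℝ≥0, V)) (t : ℝ≥0) : C0 V :=
  ⟨⟨fun s => x (t + s) - x t,
    ((x.continuous.comp (continuous_const.add continuous_id)).sub continuous_const)⟩,
    by simp⟩

/-- The shift operator `Θ(x,t) := x(t+·)` for `t ≥ 0`. -/
def shiftCM {α : Type*} [TopologicalSpace α] (x : C(ℝ≥0, α)) (t : ℝ≥0) : C(ℝ≥0, α) :=
  x.comp ⟨fun s => t + s, continuous_const.add continuous_id⟩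

lemma continuous_stop0 (t : ℝ≥0) : Continuous (fun x : C0 V => stop0 x t) := by
  apply Continuous.subtype_mk
  exact (ContinuousMap.continuous_precomp _).comp continuous_subtype_val

variable (E V)

/-- The canonical space `Ω^{𝓔,d} = 𝓔 × C_0`, with σ-field `𝔈 ⊗ σ(X)`. -/
abbrev OmegaEd : Type _ := E × C0 V

/-- The map `ω = (e,x) ↦ (e, x(·∧t))`. -/
def stopPair (t : ℝ≥0) : OmegaEd E V → OmegaEd E V := fun ω => (ω.1, stop0 ω.2 t)

lemma measurable_stopPair (t : ℝ≥0) : Measurable (stopPair E V t) :=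
  measurable_fst.prodMk (((continuous_stop0 (V := V) t).measurable).comp measurable_snd)

/-- The canonical filtration `F_t^{𝓔,d} := 𝔈 ⊗ σ(X^t)` on `Ω^{𝓔,d}`. -/
def FF : Filtration ℝ≥0 (inferInstance : MeasurableSpace (OmegaEd E V)) where
  seq t := MeasurableSpace.comap (stopPair E V t) inferInstance
  mono' := by
    intro s t hst
    have hcomp : stopPair E V s = (stopPair E V s) ∘ (stopPair E V t) := by
      funext ω
      simp only [Function.comp_apply, stopPair, stop0, stopCM]
      refine Prod.ext rfl (Subtype.ext (ContinuousMap.ext fun u => ?_))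
      simp only [ContinuousMap.comp_apply, ContinuousMap.coe_mk]
      rw [min_eq_left ((min_le_right u s).trans hst)]
    calc MeasurableSpace.comap (stopPair E V s) inferInstance
        = MeasurableSpace.comap (stopPair E V t)
            (MeasurableSpace.comap (stopPair E V s) inferInstance) := by
          nth_rewrite 1 [hcomp]
          exact MeasurableSpace.comap_comp.symm
      _ ≤ MeasurableSpace.comap (stopPair E V t) inferInstance :=
          MeasurableSpace.comap_mono
            (measurable_iff_comap_le.mp (measurable_stopPair E V s))
  le' t := measurable_iff_comap_le.mp (measurable_stopPair E V t)

variable {E V}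

/-- The σ-field `σ(Δ(X,T))` generated by the increments of the coordinate
process after the random time `T`. -/
def sigmaDelta (T : OmegaEd E V → ℝ≥0) : MeasurableSpace (OmegaEd E V) :=
  MeasurableSpace.comap (fun ω => delta ω.2.1 (T ω)) inferInstance

/-- The σ-field `σ(Δ(X^{T'},T))` generated by the increments of the coordinate
process stopped at `T'` after the random time `T`. -/
def sigmaDeltaStopped (T' T : OmegaEd E V → ℝ≥0) : MeasurableSpace (OmegaEd E V) :=
  MeasurableSpace.comap (fun ω => delta (stop0 ω.2 (T' ω)).1 (T ω)) inferInstance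

end Mimic

namespace Mimic
/-- Measures on the canonical space `Ω^{𝓔,d}` with respect to the canonical
product σ-field `F^{𝓔,d} = 𝔈 ⊗ σ(X)` (this abbreviation pins down the
σ-field, so that it is unaffected by local σ-field variables). -/
abbrev OmegaMeasure (E : Type*) [MeasurableSpace E] (V : Type*) [NormedAddCommGroup V] :
    Type _ :=
  @Measure (OmegaEd E V) Prod.instMeasurableSpace
end Mimic

namespace Mimic

variable {E : Type*} [MeasurableSpace E] {V : Type*} [NormedAddCommGroup V]

/-- The path `s ↦ x̄(s∧t) + x(s) − x(s∧t)`, i.e. the second component of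
`Ψ_{ω̄,t}(e,x) = (ē, ∇(x̄,t) + x − ∇(x,t))`. -/
def psiPath (xbar x : C0 V) (t : ℝ≥0) : C0 V :=
  ⟨⟨fun s => xbar.1 (min s t) + x.1 s - x.1 (min s t),
    ((xbar.1.continuous.comp (continuous_id.min continuous_const)).add
        x.1.continuous).sub
      (x.1.continuous.comp (continuous_id.min continuous_const))⟩,
    by
      simp only [ContinuousMap.coe_mk]
      rw [min_eq_left (zero_le : 0 ≤ t), xbar.2, x.2]
      simp⟩

/-- The concatenation map `Ψ_{ω̄,t}(e,x) := (ē, ∇(x̄,t) + x − ∇(x,t))`. -/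
def Psi (obar : OmegaEd E V) (t : ℝ≥0) : OmegaEd E V → OmegaEd E V :=
  fun ω => (obar.1, psiPath obar.2 ω.2 t)

/-- The measure `δ_ω̄ ⊗_t Q := Q ∘ Ψ_{ω̄,t}^{-1}`. -/
def deltaConcat (obar : OmegaEd E V) (t : ℝ≥0) (Q : Measure (OmegaEd E V)) :
    Measure (OmegaEd E V) :=
  Q.map (Psi obar t)

section Aux

variable {E : Type*} [MeasurableSpace E] {V : Type*} [NormedAddCommGroup V]

lemma stop0_stop0 (x : C0 V) {s t : ℝ≥0} (h : s ≤ t) : stop0 (stop0 x t) s = stop0 x s := by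
  apply Subtype.ext; ext u
  show x.1 (min (min u s) t) = x.1 (min u s)
  rw [min_eq_left ((min_le_right u s).trans h)]

lemma stop0_psiPath (xb x : C0 V) {s t : ℝ≥0} (h : s ≤ t) :
    stop0 (psiPath xb x t) s = stop0 xb s := by
  apply Subtype.ext; ext u
  show xb.1 (min (min u s) t) + x.1 (min u s) - x.1 (min (min u s) t) = xb.1 (min u s)
  rw [min_eq_left ((min_le_right u s).trans h), add_sub_cancel_right]

lemma psiPath_stop0 (xb x : C0 V) (t : ℝ≥0) : psiPath (stop0 xb t) x t = psiPath xb x t := by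
  apply Subtype.ext; ext u
  show xb.1 (min (min u t) t) + x.1 u - x.1 (min u t)
      = xb.1 (min u t) + x.1 u - x.1 (min u t)
  rw [min_eq_left (min_le_right u t)]

lemma stopPair_stopPair {s t : ℝ≥0} (h : s ≤ t) (ω : OmegaEd E V) :
    stopPair E V s (stopPair E V t ω) = stopPair E V s ω :=
  congrArg (Prod.mk ω.1) (stop0_stop0 ω.2 h)

lemma stopPair_psi (obar ω' : OmegaEd E V) {s t : ℝ≥0} (h : s ≤ t) :
    stopPair E V s (Psi obar t ω') = stopPair E V s obar :=
  congrArg (Prod.mk obar.1) (stop0_psiPath obar.2 ω'.2 h)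

lemma mem_iff_of_FF {t : ℝ≥0} {A : Set (OmegaEd E V)} (hA : MeasurableSet[(FF E V) t] A)
    {ω ω' : OmegaEd E V} (h : stopPair E V t ω = stopPair E V t ω') : ω ∈ A ↔ ω' ∈ A := by
  obtain ⟨B, -, rfl⟩ := hA
  simp only [Set.mem_preimage, h]

end Aux
section Aux2

variable {E : Type*} [MeasurableSpace E] {V : Type*} [NormedAddCommGroup V]
variable {T : OmegaEd E V → ℝ≥0}

lemma T_le_of_stopPair_eq (hT : IsStoppingTime (FF E V) (fun ω => (T ω : WithTop ℝ≥0))) {ω ω' : OmegaEd E V} {t : ℝ≥0}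
    (h : stopPair E V t ω = stopPair E V t ω') (hle : T ω ≤ t) : T ω' ≤ t :=
  WithTop.coe_le_coe.mp ((mem_iff_of_FF (hT t) h).mp (WithTop.coe_le_coe.mpr hle))

lemma T_eq_of_stopPair_eq (hT : IsStoppingTime (FF E V) (fun ω => (T ω : WithTop ℝ≥0))) {ω ω' : OmegaEd E V} {t : ℝ≥0}
    (h : stopPair E V t ω = stopPair E V t ω') (hle : T ω ≤ t) : T ω' = T ω := by
  have h1 : T ω' ≤ t := T_le_of_stopPair_eq hT h hle
  apply le_antisymm
  · by_contra hc
    push_neg at hc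
    have hs : stopPair E V (T ω) ω = stopPair E V (T ω) ω' := by
      rw [← stopPair_stopPair hle ω, h, stopPair_stopPair hle ω']
    exact absurd (T_le_of_stopPair_eq hT hs le_rfl) (not_le.mpr hc)
  · by_contra hc
    push_neg at hc
    have hle' : T ω' ≤ t := hc.le.trans hle
    have hs : stopPair E V (T ω') ω' = stopPair E V (T ω') ω := by
      rw [← stopPair_stopPair hle' ω, h, stopPair_stopPair hle' ω']
    exact absurd (T_le_of_stopPair_eq hT hs le_rfl) (not_le.mpr hc)

lemma T_psi (hT : IsStoppingTime (FF E V) (fun ω => (T ω : WithTop ℝ≥0))) (ω ω' : OmegaEd E V) :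
    T (Psi ω (T ω) ω') = T ω :=
  T_eq_of_stopPair_eq hT (stopPair_psi ω ω' le_rfl).symm le_rfl

lemma mem_psi_iff (hT : IsStoppingTime (FF E V) (fun ω => (T ω : WithTop ℝ≥0))) {A : Set (OmegaEd E V)}
    (hA : MeasurableSet[hT.measurableSpace] A) (ω ω' : OmegaEd E V) :
    Psi ω (T ω) ω' ∈ A ↔ ω ∈ A := by
  rw [IsStoppingTime.measurableSet] at hA
  have h2 := mem_iff_of_FF (hA.2 (T ω)) (stopPair_psi ω ω' le_rfl)
  constructor
  · intro h
    exact (h2.mp ⟨h, by simp only [Set.mem_setOf_eq, T_psi hT ω ω', le_rfl]⟩).1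
  · intro h
    exact (h2.mpr ⟨h, Set.mem_setOf_eq ▸ le_rfl⟩).1

/-- `Psi ω (T ω) ⁻¹' A` is trivial for `A` in the stopped σ-algebra. -/
lemma psi_preimage_of_mem (hT : IsStoppingTime (FF E V) (fun ω => (T ω : WithTop ℝ≥0))) {A : Set (OmegaEd E V)}
    (hA : MeasurableSet[hT.measurableSpace] A) {ω : OmegaEd E V} (hω : ω ∈ A) :
    Psi ω (T ω) ⁻¹' A = Set.univ :=
  Set.eq_univ_of_forall fun ω' => (mem_psi_iff hT hA ω ω').mpr hω

lemma psi_preimage_of_not_mem (hT : IsStoppingTime (FF E V) (fun ω => (T ω : WithTop ℝ≥0))) {A : Set (OmegaEd E V)}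
    (hA : MeasurableSet[hT.measurableSpace] A) {ω : OmegaEd E V} (hω : ω ∉ A) :
    Psi ω (T ω) ⁻¹' A = ∅ :=
  Set.eq_empty_of_forall_notMem fun ω' h => hω ((mem_psi_iff hT hA ω ω').mp h)

end Aux2
section Aux3

variable {E : Type*} [MeasurableSpace E] {V : Type*} [NormedAddCommGroup V]

lemma continuous_stopCM_pair : Continuous fun p : C(ℝ≥0, V) × ℝ≥0 => stopCM p.1 p.2 := by
  have hmin : Continuous fun t : ℝ≥0 =>
      (⟨fun s => min s t, continuous_id.min continuous_const⟩ : C(ℝ≥0, ℝ≥0)) :=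
    ContinuousMap.continuous_of_continuous_uncurry _ (continuous_snd.min continuous_fst)
  exact ContinuousMap.continuous_comp'.comp ((hmin.comp continuous_snd).prodMk continuous_fst)

lemma continuous_stop0_pair : Continuous fun p : C0 V × ℝ≥0 => stop0 p.1 p.2 :=
  Continuous.subtype_mk (continuous_stopCM_pair.comp
    ((continuous_subtype_val.comp continuous_fst).prodMk continuous_snd)) _

lemma continuous_psiPath_pair :
    Continuous fun p : C0 V × C0 V × ℝ≥0 => psiPath p.1 p.2.1 p.2.2 := by
  apply Continuous.subtype_mk
  have h2 : Continuous fun p : C0 V × C0 V × ℝ≥0 =>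
      stopCM p.1.1 p.2.2 + p.2.1.1 - stopCM p.2.1.1 p.2.2 := by
    have c1 : Continuous fun p : C0 V × C0 V × ℝ≥0 => stopCM p.1.1 p.2.2 :=
      continuous_stopCM_pair.comp
        ((continuous_subtype_val.comp continuous_fst).prodMk (continuous_snd.comp continuous_snd))
    have c2 : Continuous fun p : C0 V × C0 V × ℝ≥0 => (p.2.1.1 : C(ℝ≥0, V)) :=
      continuous_subtype_val.comp (continuous_fst.comp continuous_snd)
    have c3 : Continuous fun p : C0 V × C0 V × ℝ≥0 => stopCM p.2.1.1 p.2.2 :=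
      continuous_stopCM_pair.comp
        ((continuous_subtype_val.comp (continuous_fst.comp continuous_snd)).prodMk
          (continuous_snd.comp continuous_snd))
    exact (c1.add c2).sub c3
  apply h2.congr
  intro p
  ext u
  show stopCM p.1.1 p.2.2 u + p.2.1.1 u - stopCM p.2.1.1 p.2.2 u = _
  rfl

end Aux3
section Aux4

variable {E : Type*} [MeasurableSpace E] {V : Type*} [NormedAddCommGroup V]
  [SecondCountableTopology V]
variable {T : OmegaEd E V → ℝ≥0}

instance : SecondCountableTopology (C0 V) := by
  have : SecondCountableTopology C(ℝ≥0, V) := inferInstance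
  exact TopologicalSpace.secondCountableTopology_induced _ _ (Subtype.val : C0 V → C(ℝ≥0, V))

lemma measurable_stopPair_pair :
    Measurable fun p : OmegaEd E V × ℝ≥0 => stopPair E V p.2 p.1 :=
  (measurable_fst.fst).prodMk ((continuous_stop0_pair.measurable).comp
    ((measurable_fst.snd).prodMk measurable_snd))

lemma measurable_T_ambient (hT : IsStoppingTime (FF E V) (fun ω => (T ω : WithTop ℝ≥0))) : Measurable T := by
  have h := (WithTop.measurable_untopD (0 : ℝ≥0)).comp
    (hT.measurable.mono hT.measurableSpace_le le_rfl)
  convert h using 1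
  funext ω
  rfl

lemma measurable_T_m (hT : IsStoppingTime (FF E V) (fun ω => (T ω : WithTop ℝ≥0))) :
    Measurable[hT.measurableSpace] T := by
  have h := (WithTop.measurable_untopD (0 : ℝ≥0)).comp hT.measurable
  convert h using 1
  funext ω
  rfl

lemma measurable_stoppedOfT_ambient (hT : IsStoppingTime (FF E V) (fun ω => (T ω : WithTop ℝ≥0))) :
    Measurable fun ω : OmegaEd E V => stopPair E V (T ω) ω :=
  measurable_stopPair_pair.comp (measurable_id.prodMk (measurable_T_ambient hT))

lemma measurable_stoppedOfT (hT : IsStoppingTime (FF E V) (fun ω => (T ω : WithTop ℝ≥0))) :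
    Measurable[hT.measurableSpace] fun ω => stopPair E V (T ω) ω := by
  intro B hB
  rw [hT.measurableSet]
  suffices hmain : ∀ t : ℝ≥0, MeasurableSet[(FF E V) t]
      ((fun ω => stopPair E V (T ω) ω) ⁻¹' B ∩ {ω | T ω ≤ t}) by
    have hset : ∀ t : ℝ≥0, {ω : OmegaEd E V | ((T ω : ℝ≥0) : WithTop ℝ≥0) ≤ (t : WithTop ℝ≥0)}
        = {ω | T ω ≤ t} := fun t => by ext ω; exact WithTop.coe_le_coe
    refine ⟨?_, fun t => ?_⟩
    · have hU : (fun ω => stopPair E V (T ω) ω) ⁻¹' B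
          = ⋃ n : ℕ, ((fun ω => stopPair E V (T ω) ω) ⁻¹' B ∩ {ω | T ω ≤ (n : ℝ≥0)}) := by
        ext ω
        simp only [Set.mem_iUnion, Set.mem_inter_iff, Set.mem_setOf_eq]
        constructor
        · intro h
          obtain ⟨n, hn⟩ := exists_nat_ge (T ω)
          exact ⟨n, h, hn⟩
        · rintro ⟨n, h, -⟩
          exact h
      rw [hU]
      exact MeasurableSet.iUnion fun n => le_iSup (fun t => (FF E V) t) (n : ℝ≥0) _ (hmain n)
    · show MeasurableSet[(FF E V) t] ((fun ω => stopPair E V (T ω) ω) ⁻¹' B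
        ∩ {ω | ((T ω : ℝ≥0) : WithTop ℝ≥0) ≤ (t : WithTop ℝ≥0)})
      rw [hset]
      exact hmain t
  intro t
  set D : Set (OmegaEd E V) :=
    (fun ω => stopPair E V (T ω) ω) ⁻¹' B ∩ {ω | T ω ≤ t} with hD
  have hDmeas : MeasurableSet D :=
    ((measurable_stoppedOfT_ambient hT) hB).inter
      (measurableSet_le (measurable_T_ambient hT) measurable_const)
  have hCeq : (fun ω => stopPair E V (T ω) ω) ⁻¹' B ∩ {ω | T ω ≤ t}
      = stopPair E V t ⁻¹' D := by
    ext ω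
    simp only [hD, Set.mem_inter_iff, Set.mem_preimage, Set.mem_setOf_eq]
    constructor
    · rintro ⟨h1, h2⟩
      have he : T (stopPair E V t ω) = T ω :=
        T_eq_of_stopPair_eq hT (stopPair_stopPair le_rfl ω).symm h2
      refine ⟨?_, by rw [he]; exact h2⟩
      rw [he, stopPair_stopPair h2 ω]
      exact h1
    · rintro ⟨h1, h2⟩
      have he : T ω = T (stopPair E V t ω) :=
        T_eq_of_stopPair_eq hT (stopPair_stopPair le_rfl ω) h2
      have h2' : T ω ≤ t := he ▸ h2
      refine ⟨?_, h2'⟩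
      rw [← he, stopPair_stopPair h2' ω] at h1
      exact h1
  exact MeasurableSpace.measurableSet_comap.mpr ⟨D, hDmeas, hCeq.symm⟩

lemma measurable_fst_m (hT : IsStoppingTime (FF E V) (fun ω => (T ω : WithTop ℝ≥0))) :
    Measurable[hT.measurableSpace] fun ω : OmegaEd E V => ω.1 :=
  (measurable_fst.comp (measurable_stoppedOfT hT) : _)

lemma measurable_stop0T_m (hT : IsStoppingTime (FF E V) (fun ω => (T ω : WithTop ℝ≥0))) :
    Measurable[hT.measurableSpace] fun ω : OmegaEd E V => stop0 ω.2 (T ω) :=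
  (measurable_snd.comp (measurable_stoppedOfT hT) : _)

end Aux4
section Aux5

open ProbabilityTheory

variable {E : Type*} [MeasurableSpace E] {V : Type*} [NormedAddCommGroup V]
  [SecondCountableTopology V]
variable {T : OmegaEd E V → ℝ≥0}

lemma measurable_psi (obar : OmegaEd E V) (t : ℝ≥0) : Measurable (Psi obar t) :=
  measurable_const.prodMk
    (((continuous_psiPath_pair.comp
      (continuous_const.prodMk (continuous_id.prodMk continuous_const))).measurable).comp
        measurable_snd)

lemma measurable_psi_joint (hT : IsStoppingTime (FF E V) (fun ω => (T ω : WithTop ℝ≥0))) :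
    @Measurable (OmegaEd E V × OmegaEd E V) (OmegaEd E V)
      (@Prod.instMeasurableSpace _ _ hT.measurableSpace _) _
      (fun p => Psi p.1 (T p.1) p.2) := by
  have h1 : (fun p : OmegaEd E V × OmegaEd E V => Psi p.1 (T p.1) p.2)
      = fun p => (p.1.1, psiPath (stop0 p.1.2 (T p.1)) p.2.2 (T p.1)) := by
    funext p
    exact congrArg (Prod.mk p.1.1) (psiPath_stop0 p.1.2 p.2.2 (T p.1)).symm
  rw [h1]
  refine Measurable.prodMk ?_ ?_
  · exact (measurable_fst_m hT).comp measurable_fst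
  · have hcont : Measurable fun q : C0 V × C0 V × ℝ≥0 => psiPath q.1 q.2.1 q.2.2 :=
      continuous_psiPath_pair.measurable
    exact hcont.comp (Measurable.prodMk ((measurable_stop0T_m hT).comp measurable_fst)
      (Measurable.prodMk measurable_snd.snd ((measurable_T_m hT).comp measurable_fst)))

lemma measurable_dc (hT : IsStoppingTime (FF E V) (fun ω => (T ω : WithTop ℝ≥0)))
    (Q : OmegaEd E V → Measure (OmegaEd E V))
    (hQprob : ∀ ω, IsProbabilityMeasure (Q ω))
    (hQmeas : ∀ A : Set (OmegaEd E V), MeasurableSet A →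
      Measurable[hT.measurableSpace] fun ω => Q ω A)
    {F : Set (OmegaEd E V)} (hF : MeasurableSet F) :
    Measurable[hT.measurableSpace] fun ω => deltaConcat ω (T ω) (Q ω) F := by
  have key : (fun ω => deltaConcat ω (T ω) (Q ω) F)
      = fun ω => Q ω (Psi ω (T ω) ⁻¹' F) :=
    funext fun ω => Measure.map_apply (measurable_psi ω (T ω)) hF
  rw [key]
  have hQm : @Measurable (OmegaEd E V) (Measure (OmegaEd E V)) hT.measurableSpace _ Q :=
    @Measure.measurable_of_measurable_coe _ _ _ hT.measurableSpace Q (fun s hs => hQmeas s hs)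
  set κ : Kernel[hT.measurableSpace] (OmegaEd E V) (OmegaEd E V) :=
    @Kernel.mk _ _ hT.measurableSpace _ Q hQm with hκ
  have hcoe : ∀ ω, κ ω = Q ω := fun _ => rfl
  haveI : IsMarkovKernel κ := ⟨fun ω => hcoe ω ▸ hQprob ω⟩
  have hS : MeasurableSet[@Prod.instMeasurableSpace _ _ hT.measurableSpace _]
      ((fun p : OmegaEd E V × OmegaEd E V => Psi p.1 (T p.1) p.2) ⁻¹' F) :=
    measurable_psi_joint hT hF
  have h := @Kernel.measurable_kernel_prodMk_left _ _ hT.measurableSpace _ κ _ _ hS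
  simp only [hcoe] at h
  exact h

end Aux5
/-- **Proposition (concatenation of a measure and a kernel at a stopping time).**
Given a probability measure `P` on `(Ω^{𝓔,d}, F^{𝓔,d})`, an everywhere finite
stopping time `T`, and a probability kernel `Q` from `(Ω^{𝓔,d}, F^{𝓔,d}_T)` to
`(Ω^{𝓔,d}, F^{𝓔,d})`, there is a unique probability measure `P ⊗_T Q` agreeing
with `P` on `F^{𝓔,d}_T` and such that for each `F ∈ F^{𝓔,d}`, the map
`ω ↦ (δ_ω ⊗_{T(ω)} Q(ω,·))[F]` is a version of `(P ⊗_T Q)[F | F^{𝓔,d}_T]`. -/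
theorem measure_kernel_concat_exists_unique
    {E : Type} [TopologicalSpace E] [PolishSpace E] [MeasurableSpace E] [BorelSpace E]
    {d : ℕ} (hd : 0 < d)
    (P : Measure (OmegaEd E (EuclideanSpace ℝ (Fin d)))) [IsProbabilityMeasure P]
    (T : OmegaEd E (EuclideanSpace ℝ (Fin d)) → ℝ≥0)
    (hT : IsStoppingTime (FF E (EuclideanSpace ℝ (Fin d))) (fun ω => (T ω : WithTop ℝ≥0)))
    -- `Q` is a probability kernel from `(Ω, F_T)` to `(Ω, F)`
    (Q : OmegaEd E (EuclideanSpace ℝ (Fin d)) → Measure (OmegaEd E (EuclideanSpace ℝ (Fin d))))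
    (hQprob : ∀ ω, IsProbabilityMeasure (Q ω))
    (hQmeas : ∀ A : Set (OmegaEd E (EuclideanSpace ℝ (Fin d))), MeasurableSet A →
      Measurable[hT.measurableSpace] (fun ω => Q ω A)) :
    ∃! μ : Measure (OmegaEd E (EuclideanSpace ℝ (Fin d))),
      IsProbabilityMeasure μ ∧
      (∀ A, MeasurableSet[hT.measurableSpace] A → μ A = P A) ∧
      (∀ F : Set (OmegaEd E (EuclideanSpace ℝ (Fin d))), MeasurableSet F →
        (fun ω => (deltaConcat ω (T ω) (Q ω) F).toReal)
          =ᵐ[μ] μ[F.indicator (fun _ => (1 : ℝ)) | hT.measurableSpace]) := by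
  have hm : hT.measurableSpace ≤ (inferInstance : MeasurableSpace (OmegaEd E (EuclideanSpace ℝ (Fin d)))) := hT.measurableSpace_le
  set κfun : (OmegaEd E (EuclideanSpace ℝ (Fin d))) → Measure (OmegaEd E (EuclideanSpace ℝ (Fin d))) := fun ω => deltaConcat ω (T ω) (Q ω) with hκfun
  have hκprob : ∀ ω, IsProbabilityMeasure (κfun ω) := fun ω => by
    haveI := hQprob ω
    exact Measure.isProbabilityMeasure_map (measurable_psi ω (T ω)).aemeasurable
  have hκmeasm : ∀ F : Set (OmegaEd E (EuclideanSpace ℝ (Fin d))), MeasurableSet F → Measurable[hT.measurableSpace] (fun ω => κfun ω F) :=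
    fun F hF => measurable_dc hT Q hQprob hQmeas hF
  have hκmeas : Measurable κfun :=
    Measure.measurable_of_measurable_coe _ fun s hs => (hκmeasm s hs).mono hm le_rfl
  set μ : Measure (OmegaEd E (EuclideanSpace ℝ (Fin d))) := P.bind κfun with hμdef
  -- the key indicator identity
  have hinter : ∀ (F A : Set (OmegaEd E (EuclideanSpace ℝ (Fin d)))), MeasurableSet F → MeasurableSet[hT.measurableSpace] A → ∀ ω,
      κfun ω (F ∩ A) = Set.indicator A (fun ω' => κfun ω' F) ω := by
    intro F A hF hA ω
    have hA' : MeasurableSet A := hm _ hA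
    show (Q ω).map (Psi ω (T ω)) (F ∩ A) = _
    rw [Measure.map_apply (measurable_psi ω (T ω)) (hF.inter hA')]
    by_cases hω : ω ∈ A
    · rw [Set.indicator_of_mem hω, Set.preimage_inter, psi_preimage_of_mem hT hA hω,
        Set.inter_univ]
      exact (Measure.map_apply (measurable_psi ω (T ω)) hF).symm
    · rw [Set.indicator_of_notMem hω, Set.preimage_inter, psi_preimage_of_not_mem hT hA hω,
        Set.inter_empty, measure_empty]
  -- property (a)
  have ha : ∀ A, MeasurableSet[hT.measurableSpace] A → μ A = P A := by
    intro A hA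
    have hA' : MeasurableSet A := hm _ hA
    rw [hμdef, Measure.bind_apply hA' hκmeas.aemeasurable]
    have hval : ∀ ω, κfun ω A = Set.indicator A (fun _ => (1 : ℝ≥0∞)) ω := by
      intro ω
      have h0 := hinter Set.univ A MeasurableSet.univ hA ω
      rw [Set.univ_inter] at h0
      rw [h0]
      by_cases hω : ω ∈ A
      · rw [Set.indicator_of_mem hω, Set.indicator_of_mem hω]
        haveI := hκprob ω
        exact measure_univ
      · rw [Set.indicator_of_notMem hω, Set.indicator_of_notMem hω]
    simp_rw [hval]
    exact lintegral_indicator_one hA'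
  haveI hμprob : IsProbabilityMeasure μ := ⟨by
    rw [ha Set.univ MeasurableSet.univ]; exact measure_univ⟩
  haveI : IsFiniteMeasure (μ.trim hm) :=
    ⟨by rw [trim_measurableSet_eq hm MeasurableSet.univ]; exact measure_lt_top μ _⟩
  -- property (b)
  have hb : ∀ F : Set (OmegaEd E (EuclideanSpace ℝ (Fin d))), MeasurableSet F →
      (fun ω => (κfun ω F).toReal) =ᵐ[μ] μ[F.indicator (fun _ => (1 : ℝ)) | hT.measurableSpace] := by
    intro F hF
    set g : (OmegaEd E (EuclideanSpace ℝ (Fin d))) → ℝ := fun ω => (κfun ω F).toReal with hg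
    have hgle : ∀ ω, κfun ω F ≤ 1 := fun ω => by
      haveI := hκprob ω; exact prob_le_one
    have hgm : Measurable[hT.measurableSpace] g := (hκmeasm F hF).ennreal_toReal
    have hf : Integrable (F.indicator fun _ => (1 : ℝ)) μ := (integrable_const 1).indicator hF
    have hgint : Integrable g μ := by
      refine Integrable.mono' (integrable_const (1 : ℝ))
        ((hgm.mono hm le_rfl).aestronglyMeasurable) (ae_of_all _ fun ω => ?_)
      rw [Real.norm_eq_abs, abs_of_nonneg ENNReal.toReal_nonneg]
      simpa using ENNReal.toReal_mono ENNReal.one_ne_top (hgle ω)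
    have hμtrim : μ.trim hm = P.trim hm := by
      refine @Measure.ext (OmegaEd E (EuclideanSpace ℝ (Fin d))) hT.measurableSpace _ _ fun s hs => ?_
      rw [trim_measurableSet_eq hm hs, trim_measurableSet_eq hm hs]
      exact ha s hs
    have hg_eq : ∀ s, MeasurableSet[hT.measurableSpace] s → μ s < ⊤ →
        ∫ x in s, g x ∂μ = ∫ x in s, F.indicator (fun _ => (1 : ℝ)) x ∂μ := by
      intro s hs _
      have hs' : MeasurableSet s := hm _ hs
      have hgs : StronglyMeasurable[hT.measurableSpace] (s.indicator g) :=
        (hgm.indicator hs).stronglyMeasurable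
      have hPint : ∫ x in s, g x ∂P = (∫⁻ x in s, κfun x F ∂P).toReal := by
        rw [integral_toReal (((hκmeasm F hF).mono hm le_rfl).aemeasurable.restrict)
          (ae_of_all _ fun ω => lt_of_le_of_lt (hgle ω) ENNReal.one_lt_top)]
      have hμFs : μ (F ∩ s) = ∫⁻ x in s, κfun x F ∂P := by
        rw [hμdef, Measure.bind_apply (hF.inter hs') hκmeas.aemeasurable]
        have : ∀ ω, κfun ω (F ∩ s) = Set.indicator s (fun ω' => κfun ω' F) ω :=
          hinter F s hF hs
        simp_rw [this]
        exact lintegral_indicator hs' _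
      calc ∫ x in s, g x ∂μ = ∫ x, s.indicator g x ∂μ := (integral_indicator hs').symm
        _ = ∫ x, s.indicator g x ∂(μ.trim hm) := integral_trim hm hgs
        _ = ∫ x, s.indicator g x ∂(P.trim hm) := by rw [hμtrim]
        _ = ∫ x, s.indicator g x ∂P := (integral_trim hm hgs).symm
        _ = ∫ x in s, g x ∂P := integral_indicator hs'
        _ = (μ (F ∩ s)).toReal := by rw [hPint, hμFs]
        _ = ∫ x in s, F.indicator (fun _ => (1 : ℝ)) x ∂μ := by
            rw [setIntegral_indicator hF, setIntegral_const, smul_eq_mul, mul_one,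
              Set.inter_comm]
            rfl
    have hgm' : AEStronglyMeasurable[hT.measurableSpace] g μ := ⟨g, hgm.stronglyMeasurable, EventuallyEq.rfl⟩
    exact ae_eq_condExp_of_forall_setIntegral_eq hm hf
      (fun s hs _ => hgint.integrableOn) hg_eq hgm'
  -- uniqueness key
  have key : ∀ ρ : Measure (OmegaEd E (EuclideanSpace ℝ (Fin d))), IsProbabilityMeasure ρ →
      (∀ A, MeasurableSet[hT.measurableSpace] A → ρ A = P A) →
      (∀ F : Set (OmegaEd E (EuclideanSpace ℝ (Fin d))), MeasurableSet F →
        (fun ω => (κfun ω F).toReal) =ᵐ[ρ] ρ[F.indicator (fun _ => (1 : ℝ)) | hT.measurableSpace]) →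
      ∀ F : Set (OmegaEd E (EuclideanSpace ℝ (Fin d))), MeasurableSet F → (ρ F).toReal = ∫ x, (κfun x F).toReal ∂P := by
    intro ρ hρ1 hρ2 hρ3 F hF
    haveI := hρ1
    haveI : IsFiniteMeasure (ρ.trim hm) :=
      ⟨by rw [trim_measurableSet_eq hm MeasurableSet.univ]; exact measure_lt_top ρ _⟩
    have hρtrim : ρ.trim hm = P.trim hm := by
      refine @Measure.ext (OmegaEd E (EuclideanSpace ℝ (Fin d))) hT.measurableSpace _ _ fun s hs => ?_
      rw [trim_measurableSet_eq hm hs, trim_measurableSet_eq hm hs]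
      exact hρ2 s hs
    have hgsm : StronglyMeasurable[hT.measurableSpace] fun ω => (κfun ω F).toReal :=
      ((hκmeasm F hF).ennreal_toReal).stronglyMeasurable
    have h1 : ∫ x, (κfun x F).toReal ∂ρ = ∫ x, F.indicator (fun _ => (1 : ℝ)) x ∂ρ := by
      rw [integral_congr_ae (hρ3 F hF), integral_condExp hm]
    have h2 : ∫ x, F.indicator (fun _ => (1 : ℝ)) x ∂ρ = (ρ F).toReal := by
      rw [integral_indicator hF, setIntegral_const, smul_eq_mul, mul_one]
      rfl
    have h3 : ∫ x, (κfun x F).toReal ∂ρ = ∫ x, (κfun x F).toReal ∂P := by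
      rw [integral_trim hm hgsm, hρtrim, ← integral_trim hm hgsm]
    rw [← h3, h1, h2]
  refine ⟨μ, ⟨hμprob, ha, hb⟩, ?_⟩
  rintro ν ⟨hν1, hν2, hν3⟩
  haveI := hν1
  refine Measure.ext fun F hF => ?_
  have hcmp : (ν F).toReal = (μ F).toReal := by
    rw [key ν hν1 hν2 hν3 F hF, key μ hμprob ha hb F hF]
  exact (ENNReal.toReal_eq_toReal_iff' (measure_ne_top ν F) (measure_ne_top μ F)).mp hcmp

end Mimic
end
end

section
/- Let 𝓔 be a Polish space with Borel σ-field 𝔈, let Z be a jointly measurable 𝓔-valued stochastic process on a probability space (Ω, F, P), and let Γ be a jointly measurable ℝ^d-valued (respectively, d×d matrix-valued) process taking values in a closed convex set K and satisfying E[∫_0^t ‖Γ_u‖ du] < ∞ for all t ≥ 0. Then there exists a nonrandom ℝ^d-valued (respectively, d×d matrix-valued) measurable function Γ̂ on [0,∞) × 𝓔 taking values in K, and a Lebesgue-null set N ⊂ [0,∞), such that Γ̂(t, Z_t) = E[Γ_t | Z_t] almost surely for every t ∈ N^c. -/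
open MeasureTheory Filter Set
open scoped ENNReal NNReal Topology

noncomputable section

namespace Mimic

open ProbabilityTheory

theorem measurableEmbedding_coe : MeasurableEmbedding (fun x : ℝ≥0 => (x : ℝ)) :=
  ((Isometry.isClosedEmbedding (fun _ _ => rfl : Isometry (fun x : ℝ≥0 => (x:ℝ)))).measurableEmbedding)

theorem leb_apply (s : Set ℝ≥0) : leb s = (volume : Measure ℝ) ((fun x : ℝ≥0 => (x:ℝ)) '' s) :=
  measurableEmbedding_coe.comap_apply _ _

theorem coe_image_Ico (a b : ℝ≥0) : (fun x : ℝ≥0 => (x:ℝ)) '' Ico a b = Ico (a:ℝ) (b:ℝ) := by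
  ext x
  constructor
  · rintro ⟨y, ⟨h1, h2⟩, rfl⟩; exact ⟨by exact_mod_cast h1, by exact_mod_cast h2⟩
  · rintro ⟨h1, h2⟩
    have hx : 0 ≤ x := le_trans a.2 h1
    exact ⟨⟨x, hx⟩, ⟨(NNReal.coe_le_coe (r₁ := a) (r₂ := ⟨x, hx⟩)).1 h1, (NNReal.coe_lt_coe (r₁ := ⟨x, hx⟩) (r₂ := b)).1 h2⟩, rfl⟩

theorem leb_Ico (a b : ℝ≥0) : leb (Ico a b) = (b - a : ℝ≥0) := by
  rw [leb_apply, coe_image_Ico, Real.volume_Ico]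
  rcases le_total a b with h | h
  · rw [← NNReal.coe_sub h, ENNReal.ofReal_coe_nnreal]
  · rw [tsub_eq_zero_of_le h, ENNReal.ofReal_eq_zero.2 (by simp [h])]
    simp

theorem iUnion_Ico_nat : (⋃ n : ℕ, Ico (n : ℝ≥0) ((n:ℝ≥0) + 1)) = univ := by
  ext t
  simp only [mem_iUnion, mem_Ico, mem_univ, iff_true]
  exact ⟨⌊t⌋₊, Nat.floor_le t.2, by exact_mod_cast Nat.lt_floor_add_one t⟩

theorem pairwise_disjoint_Ico_nat :
    Pairwise (Function.onFun Disjoint fun n : ℕ => Ico (n : ℝ≥0) ((n:ℝ≥0) + 1)) := by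
  intro m n hmn
  apply Set.Ico_disjoint_Ico.2
  rcases lt_or_gt_of_ne hmn with h | h
  · apply le_trans (min_le_left _ _)
    apply le_trans _ (le_max_right _ _)
    exact_mod_cast Nat.succ_le_of_lt h
  · apply le_trans (min_le_right _ _)
    apply le_trans _ (le_max_left _ _)
    exact_mod_cast Nat.succ_le_of_lt h

instance : SigmaFinite leb := by
  apply Measure.sigmaFinite_of_countable (countable_range fun n : ℕ => Ico (n : ℝ≥0) ((n:ℝ≥0)+1))
  · rintro s ⟨n, rfl⟩
    rw [leb_Ico]
    exact ENNReal.coe_lt_top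
  · rw [sUnion_range]; exact iUnion_Ico_nat

/-- countable π-system containing univ, generating a countably generated σ-algebra -/
theorem exists_countable_piSystem (α : Type*) [m : MeasurableSpace α]
    [MeasurableSpace.CountablyGenerated α] :
    ∃ C : Set (Set α), C.Countable ∧ IsPiSystem C ∧ univ ∈ C ∧
      (∀ s ∈ C, MeasurableSet s) ∧ MeasurableSpace.generateFrom C = m := by
  classical
  set f := MeasurableSpace.natGeneratingSequence α with hf
  refine ⟨Set.range (fun F : Finset ℕ => ⋂ i ∈ F, f i), countable_range _, ?_, ?_, ?_, ?_⟩
  · rintro _ ⟨F, rfl⟩ _ ⟨G, rfl⟩ -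
    refine ⟨F ∪ G, ?_⟩
    simp only [Finset.mem_union]
    rw [Set.inter_comm]
    ext x
    simp only [Set.mem_iInter, Set.mem_inter_iff]
    constructor
    · intro h; exact ⟨fun i hi => h i (Or.inr hi), fun i hi => h i (Or.inl hi)⟩
    · rintro ⟨h1, h2⟩ i (hi | hi); exacts [h2 i hi, h1 i hi]
  · exact ⟨∅, by simp⟩
  · rintro _ ⟨F, rfl⟩
    exact MeasurableSet.biInter (Finset.countable_toSet F)
      fun i _ => MeasurableSpace.measurableSet_natGeneratingSequence (α := α) i
  · apply le_antisymm
    · apply MeasurableSpace.generateFrom_le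
      rintro _ ⟨F, rfl⟩
      exact MeasurableSet.biInter (Finset.countable_toSet F)
        fun i _ => MeasurableSpace.measurableSet_natGeneratingSequence (α := α) i
    · rw [← MeasurableSpace.generateFrom_natGeneratingSequence α]
      apply MeasurableSpace.generateFrom_le
      rintro _ ⟨i, rfl⟩
      apply MeasurableSpace.measurableSet_generateFrom
      exact ⟨{i}, by simp [hf]⟩


/-- **Proposition.** Let `𝓔` be a Polish space, `Z` a jointly measurable
`𝓔`-valued process, and `Γ` a jointly measurable `ℝ^d`-valued process taking
values in a closed convex set `K` with `E ∫_0^t ‖Γ_u‖ du < ∞` for all `t`.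
Then there is a nonrandom measurable function `Γ̂ : [0,∞) × 𝓔 → K` and a
Lebesgue-null set `N ⊂ [0,∞)` with `Γ̂(t,Z_t) = E[Γ_t | Z_t]` for `t ∉ N`. -/
theorem conditional_expectation_function_exists
    {E : Type} [TopologicalSpace E] [PolishSpace E] [MeasurableSpace E] [BorelSpace E]
    {Ω : Type} [MeasurableSpace Ω]
    (P : Measure Ω) [IsProbabilityMeasure P]
    {d : ℕ} (hd : 0 < d)
    (Z : ℝ≥0 → Ω → E) (hZ : Measurable (Function.uncurry Z))
    (Γ : ℝ≥0 → Ω → EuclideanSpace ℝ (Fin d))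
    (hΓ : Measurable (Function.uncurry Γ))
    (K : Set (EuclideanSpace ℝ (Fin d))) (hKclosed : IsClosed K) (hKconv : Convex ℝ K)
    (hΓK : ∀ t ω, Γ t ω ∈ K)
    -- `E[∫_0^t ‖Γ_u‖ du] < ∞` for all `t ≥ 0`
    (hΓint : ∀ t : ℝ≥0, ∫⁻ ω, (∫⁻ u in Set.Iic t, (‖Γ u ω‖₊ : ℝ≥0∞) ∂leb) ∂P < ⊤) :
    ∃ Γhat : ℝ≥0 × E → EuclideanSpace ℝ (Fin d),
      Measurable Γhat ∧ (∀ p, Γhat p ∈ K) ∧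
      ∃ N : Set ℝ≥0, leb N = 0 ∧
        ∀ t ∉ N,
          (fun ω => Γhat (t, Z t ω))
            =ᵐ[P] P[Γ t | MeasurableSpace.comap (Z t) inferInstance] := by
  classical
  have hZt : ∀ t, Measurable (Z t) := fun t => hZ.comp measurable_prodMk_left
  have hΓt : ∀ t, Measurable (Γ t) := fun t => hΓ.comp measurable_prodMk_left
  have hΩ : Nonempty Ω := by
    by_contra h
    have h1 := measure_univ (μ := P)
    rw [Set.univ_eq_empty_iff.2 (not_nonempty_iff.1 h), measure_empty] at h1
    simp at h1
  obtain ⟨ω₀⟩ := hΩ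
  set k₀ := Γ 0 ω₀ with hk₀_def
  have hk₀ : k₀ ∈ K := hΓK 0 ω₀
  -- the weight and the finite measure ν equivalent to leb
  set u : ℝ≥0 → ℝ≥0∞ := fun t => ((2:ℝ≥0∞) ^ (⌊t⌋₊ + 1))⁻¹ with hu_def
  have hu_meas : Measurable u := by
    have h1 : Measurable fun t : ℝ≥0 => (⌊t⌋₊ + 1) := measurable_id.nat_floor.add_const 1
    exact ((measurable_of_countable (fun n : ℕ => (2:ℝ≥0∞) ^ n)).comp h1).inv
  have hu_ne : ∀ t, u t ≠ 0 := by
    intro t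
    simp only [hu_def, ne_eq, ENNReal.inv_eq_zero]
    exact ENNReal.pow_ne_top (by norm_num)
  set ν : Measure ℝ≥0 := leb.withDensity u with hν_def
  have hν_ac : ∀ S : Set ℝ≥0, ν S = 0 → leb S = 0 := by
    intro S hS
    obtain ⟨S', hSS', hS'm, hS'0⟩ := exists_measurable_superset_of_null (by exact hS)
    rw [hν_def, withDensity_apply _ hS'm] at hS'0
    have h2 : ∀ᵐ t ∂(leb.restrict S'), u t = 0 := by
      have := (@lintegral_eq_zero_iff _ _ (leb.restrict S') u hu_meas).1 hS'0
      exact this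
    have h3 : leb S' = 0 := by
      have h4 : ∀ᵐ t ∂(leb.restrict S'), False := by
        filter_upwards [h2] with t ht
        exact hu_ne t ht
      rw [ae_iff] at h4
      simpa [Measure.restrict_apply_univ] using h4
    exact measure_mono_null hSS' h3
  haveI : IsFiniteMeasure ν := by
    constructor
    rw [hν_def, withDensity_apply _ MeasurableSet.univ, Measure.restrict_univ]
    calc ∫⁻ t, u t ∂leb = ∑' n : ℕ, ∫⁻ t in Ico (n:ℝ≥0) ((n:ℝ≥0)+1), u t ∂leb := by
          rw [← lintegral_iUnion (fun n => measurableSet_Ico) pairwise_disjoint_Ico_nat,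
            iUnion_Ico_nat, Measure.restrict_univ]
      _ ≤ ∑' n : ℕ, ((2:ℝ≥0∞)⁻¹) ^ n := by
          apply ENNReal.tsum_le_tsum
          intro n
          have hb : ∀ t ∈ Ico (n:ℝ≥0) ((n:ℝ≥0)+1), u t ≤ ((2:ℝ≥0∞)⁻¹) ^ n := by
            intro t ht
            have hfl : ⌊t⌋₊ = n := by
              apply Nat.floor_eq_on_Ico
              exact ht
            rw [hu_def]
            simp only [hfl]
            rw [← ENNReal.inv_pow]
            exact ENNReal.inv_le_inv.2 (pow_le_pow_right₀ (by norm_num) (Nat.le_succ n))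
          calc ∫⁻ t in Ico (n:ℝ≥0) ((n:ℝ≥0)+1), u t ∂leb
              ≤ ∫⁻ _ in Ico (n:ℝ≥0) ((n:ℝ≥0)+1), ((2:ℝ≥0∞)⁻¹) ^ n ∂leb := by
                apply setLIntegral_mono' measurableSet_Ico hb
            _ = ((2:ℝ≥0∞)⁻¹) ^ n * leb (Ico (n:ℝ≥0) ((n:ℝ≥0)+1)) := by
                rw [setLIntegral_const]
            _ ≤ ((2:ℝ≥0∞)⁻¹) ^ n := by
                rw [leb_Ico]
                simp
      _ < ⊤ := by
          rw [ENNReal.tsum_geometric]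
          exact ENNReal.inv_lt_top.2 (tsub_pos_of_lt (by norm_num))
  -- the product space setup
  set ρ : Measure (ℝ≥0 × Ω) := ν.prod P with hρ_def
  set Φ : ℝ≥0 × Ω → ℝ≥0 × E := fun p => (p.1, Z p.1 p.2) with hΦ_def
  have hΦ : Measurable Φ := measurable_fst.prodMk hZ
  set Y : ℝ≥0 × Ω → EuclideanSpace ℝ (Fin d) := fun p => Γ p.1 p.2 with hY_def
  have hY : Measurable Y := hΓ
  set κ : Kernel (ℝ≥0 × E) (EuclideanSpace ℝ (Fin d)) := condDistrib Y Φ ρ with hκ_def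
  set v : ℝ≥0 × E → EuclideanSpace ℝ (Fin d) := fun q => ∫ y, y ∂(κ q) with hv_def
  have hv : Measurable v := by
    have h1 : StronglyMeasurable
        (fun p : (ℝ≥0 × E) × (EuclideanSpace ℝ (Fin d)) => p.2) :=
      measurable_snd.stronglyMeasurable
    exact (h1.integral_kernel_prod_right' (κ := κ)).measurable
  refine ⟨fun q => if v q ∈ K then v q else k₀, ?_, ?_, ?_⟩
  · exact Measurable.ite (hv hKclosed.measurableSet) hv measurable_const
  · intro q
    by_cases h : v q ∈ K <;> simp [h, hk₀]
  -- a.e. integrability of Γ t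
  have hφ_meas : Measurable (fun t => ∫⁻ ω, (‖Γ t ω‖₊ : ℝ≥0∞) ∂P) := by
    apply Measurable.lintegral_prod_right' (f := fun p : ℝ≥0 × Ω => (‖Γ p.1 p.2‖₊ : ℝ≥0∞))
    exact hΓ.enorm
  have hInt_ae : ∀ᵐ t ∂leb, Integrable (Γ t) P := by
    have hfin : ∀ᵐ t ∂leb, (∫⁻ ω, (‖Γ t ω‖₊ : ℝ≥0∞) ∂P) < ⊤ := by
      set Sbad := {t : ℝ≥0 | ¬ (∫⁻ ω, (‖Γ t ω‖₊ : ℝ≥0∞) ∂P) < ⊤} with hSbad_def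
      have hSbad_m : MeasurableSet Sbad := by
        have : Sbad = (fun t => ∫⁻ ω, (‖Γ t ω‖₊ : ℝ≥0∞) ∂P) ⁻¹' {⊤} := by
          ext t; simp [hSbad_def, lt_top_iff_ne_top]
        rw [this]
        exact hφ_meas (measurableSet_singleton _)
      have hsub : Sbad ⊆ ⋃ n : ℕ, (Sbad ∩ Iic (n : ℝ≥0)) := by
        intro t ht
        exact mem_iUnion.2 ⟨⌈t⌉₊, ht, Nat.le_ceil t⟩
      have hnull : ∀ n : ℕ, leb (Sbad ∩ Iic (n:ℝ≥0)) = 0 := by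
        intro n
        have hswap : ∫⁻ t in Iic (n:ℝ≥0), (∫⁻ ω, (‖Γ t ω‖₊ : ℝ≥0∞) ∂P) ∂leb < ⊤ := by
          have h1 := hΓint n
          rw [lintegral_lintegral_swap] at h1
          · exact h1
          · exact (hΓ.enorm.comp (measurable_snd.prodMk measurable_fst)).aemeasurable
        have h2 : ∀ᵐ t ∂(leb.restrict (Iic (n:ℝ≥0))),
            (∫⁻ ω, (‖Γ t ω‖₊ : ℝ≥0∞) ∂P) < ⊤ := ae_lt_top hφ_meas hswap.ne
        rw [ae_iff] at h2
        rw [Measure.restrict_apply' measurableSet_Iic] at h2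
        exact h2
      rw [ae_iff]
      exact measure_mono_null hsub (measure_iUnion_null hnull)
    filter_upwards [hfin] with t ht
    exact ⟨(hΓt t).aestronglyMeasurable, ht⟩
  -- countable π-systems
  obtain ⟨πE, hπE_c, hπE_pi, hπE_univ, hπE_meas, hπE_gen⟩ := exists_countable_piSystem E
  obtain ⟨πR, hπR_c, hπR_pi, hπR_univ, hπR_meas, hπR_gen⟩ :=
    exists_countable_piSystem (EuclideanSpace ℝ (Fin d))
  -- the key a.e. identity, for each pair of π-system sets
  have hGood : ∀ s ∈ πE, ∀ B ∈ πR, ∀ᵐ t ∂ν,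
      P (Z t ⁻¹' s ∩ Γ t ⁻¹' B) = ∫⁻ ω in Z t ⁻¹' s, κ (t, Z t ω) B ∂P := by
    intro s hs B hB
    have hsm := hπE_meas s hs
    have hBm := hπR_meas B hB
    set D : Set (ℝ≥0 × Ω) := Φ ⁻¹' (univ ×ˢ s) with hD_def
    have hDm : MeasurableSet D := hΦ (MeasurableSet.univ.prod hsm)
    set q₁ : ℝ≥0 × Ω → ℝ≥0∞ := (D ∩ Y ⁻¹' B).indicator (fun _ => 1) with hq₁_def
    set q₂ : ℝ≥0 × Ω → ℝ≥0∞ := D.indicator (fun p => κ (Φ p) B) with hq₂_def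
    have hq₁m : Measurable q₁ := measurable_const.indicator (hDm.inter (hY hBm))
    have hq₂m : Measurable q₂ := ((Kernel.measurable_coe κ hBm).comp hΦ).indicator hDm
    have hq₁le : ∀ p, q₁ p ≤ 1 := by
      intro p
      rw [hq₁_def]
      unfold Set.indicator
      split <;> simp
    have hq₂le : ∀ p, q₂ p ≤ 1 := by
      intro p
      rw [hq₂_def]
      unfold Set.indicator
      split
      · exact prob_le_one
      · simp
    -- Fubini reduction
    have hfub : ∀ q : ℝ≥0 × Ω → ℝ≥0∞, Measurable q → ∀ A : Set ℝ≥0, MeasurableSet A →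
        ∫⁻ t in A, (∫⁻ ω, q (t, ω) ∂P) ∂ν = ∫⁻ p in A ×ˢ univ, q p ∂ρ := by
      intro q hq A hA
      have h1 : ρ.restrict (A ×ˢ univ) = (ν.restrict A).prod P := by
        rw [hρ_def, ← Measure.prod_restrict, Measure.restrict_univ]
      calc ∫⁻ t in A, (∫⁻ ω, q (t, ω) ∂P) ∂ν
          = ∫⁻ p, q p ∂((ν.restrict A).prod P) := (lintegral_prod q hq.aemeasurable).symm
        _ = ∫⁻ p in A ×ˢ univ, q p ∂ρ := by rw [h1]
    have key : ∀ A : Set ℝ≥0, MeasurableSet A →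
        ∫⁻ t in A, (∫⁻ ω, q₁ (t, ω) ∂P) ∂ν = ∫⁻ t in A, (∫⁻ ω, q₂ (t, ω) ∂P) ∂ν := by
      intro A hA
      rw [hfub q₁ hq₁m A hA, hfub q₂ hq₂m A hA]
      have hset : D ∩ (A ×ˢ univ) = Φ ⁻¹' (A ×ˢ s) := by
        rw [hD_def]
        ext p
        simp only [mem_inter_iff, mem_preimage, mem_prod, mem_univ, hΦ_def, true_and, and_true]
        tauto
      have hR : ∫⁻ p in A ×ˢ univ, q₂ p ∂ρ = ρ (Φ ⁻¹' (A ×ˢ s) ∩ Y ⁻¹' B) := by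
        rw [hq₂_def, lintegral_indicator hDm, Measure.restrict_restrict hDm, hset]
        exact setLIntegral_condDistrib_of_measurableSet hΦ hY.aemeasurable hBm
          ⟨A ×ˢ s, hA.prod hsm, rfl⟩
      have hL : ∫⁻ p in A ×ˢ univ, q₁ p ∂ρ = ρ (Φ ⁻¹' (A ×ˢ s) ∩ Y ⁻¹' B) := by
        rw [hq₁_def, lintegral_indicator (hDm.inter (hY hBm))]
        rw [setLIntegral_one, Measure.restrict_apply (hDm.inter (hY hBm))]
        congr 1
        rw [← hset]
        ext p
        simp only [mem_inter_iff]
        tauto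
      rw [hL, hR]
    -- conclude a.e. equality of the sliced functions
    have hg₁m : Measurable (fun t => ∫⁻ ω, q₁ (t, ω) ∂P) :=
      Measurable.lintegral_prod_right' hq₁m
    have hg₂m : Measurable (fun t => ∫⁻ ω, q₂ (t, ω) ∂P) :=
      Measurable.lintegral_prod_right' hq₂m
    have hbound : ∀ q : ℝ≥0 × Ω → ℝ≥0∞, (∀ p, q p ≤ 1) →
        ∫⁻ t, (∫⁻ ω, q (t, ω) ∂P) ∂ν ≠ ⊤ := by
      intro q hq
      have : ∫⁻ t, (∫⁻ ω, q (t, ω) ∂P) ∂ν ≤ ∫⁻ _, 1 ∂ν := by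
        apply lintegral_mono
        intro t
        calc ∫⁻ ω, q (t, ω) ∂P ≤ ∫⁻ _, 1 ∂P := lintegral_mono fun ω => hq _
          _ = 1 := by simp
      apply ne_of_lt
      apply lt_of_le_of_lt this
      simp only [lintegral_one]
      exact measure_lt_top ν univ
    have hae : (fun t => ∫⁻ ω, q₁ (t, ω) ∂P) =ᵐ[ν] (fun t => ∫⁻ ω, q₂ (t, ω) ∂P) :=
      AEMeasurable.ae_eq_of_forall_setLIntegral_eq hg₁m.aemeasurable hg₂m.aemeasurable
        (hbound q₁ hq₁le) (hbound q₂ hq₂le) (fun A hA _ => key A hA)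
    filter_upwards [hae] with t ht
    -- identify both sides
    have e₁ : ∫⁻ ω, q₁ (t, ω) ∂P = P (Z t ⁻¹' s ∩ Γ t ⁻¹' B) := by
      have : (fun ω => q₁ (t, ω)) = (Z t ⁻¹' s ∩ Γ t ⁻¹' B).indicator (fun _ => (1:ℝ≥0∞)) := by
        ext ω
        rw [hq₁_def]
        by_cases h : ω ∈ Z t ⁻¹' s ∩ Γ t ⁻¹' B
        · rw [Set.indicator_of_mem h]
          apply Set.indicator_of_mem
          simp only [hD_def, mem_inter_iff, mem_preimage, hΦ_def, mem_prod, mem_univ, true_and]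
          exact ⟨h.1, h.2⟩
        · rw [Set.indicator_of_notMem h]
          apply Set.indicator_of_notMem
          simp only [hD_def, mem_inter_iff, mem_preimage, hΦ_def, mem_prod, mem_univ, true_and]
          intro hc
          exact h ⟨hc.1, hc.2⟩
      rw [this, lintegral_indicator ((hZt t) hsm |>.inter ((hΓt t) hBm)), setLIntegral_one]
    have e₂ : ∫⁻ ω, q₂ (t, ω) ∂P = ∫⁻ ω in Z t ⁻¹' s, κ (t, Z t ω) B ∂P := by
      have : (fun ω => q₂ (t, ω)) = (Z t ⁻¹' s).indicator (fun ω => κ (t, Z t ω) B) := by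
        ext ω
        rw [hq₂_def]
        by_cases h : ω ∈ Z t ⁻¹' s
        · rw [Set.indicator_of_mem h]
          apply Set.indicator_of_mem
          simp only [hD_def, mem_preimage, hΦ_def, mem_prod, mem_univ, true_and]
          exact h
        · rw [Set.indicator_of_notMem h]
          apply Set.indicator_of_notMem
          simp only [hD_def, mem_preimage, hΦ_def, mem_prod, mem_univ, true_and]
          exact h
      rw [this, lintegral_indicator ((hZt t) hsm)]
    rw [← e₁, ← e₂]
    exact ht
  -- combine over the countable π-systems
  have hGoodAll : ∀ᵐ t ∂ν, ∀ s ∈ πE, ∀ B ∈ πR,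
      P (Z t ⁻¹' s ∩ Γ t ⁻¹' B) = ∫⁻ ω in Z t ⁻¹' s, κ (t, Z t ω) B ∂P := by
    rw [ae_ball_iff hπE_c]
    intro s hs
    rw [ae_ball_iff hπR_c]
    exact fun B hB => hGood s hs B hB
  -- the null set
  set N : Set ℝ≥0 := {t | ¬ (Integrable (Γ t) P ∧ ∀ s ∈ πE, ∀ B ∈ πR,
      P (Z t ⁻¹' s ∩ Γ t ⁻¹' B) = ∫⁻ ω in Z t ⁻¹' s, κ (t, Z t ω) B ∂P)} with hN_def
  refine ⟨N, ?_, ?_⟩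
  · have hsub : N ⊆ {t | ¬ Integrable (Γ t) P} ∪
        {t | ¬ ∀ s ∈ πE, ∀ B ∈ πR,
          P (Z t ⁻¹' s ∩ Γ t ⁻¹' B) = ∫⁻ ω in Z t ⁻¹' s, κ (t, Z t ω) B ∂P} := by
      intro t ht
      rw [hN_def] at ht
      simp only [mem_setOf_eq, not_and_or] at ht
      exact ht
    apply measure_mono_null hsub
    apply measure_union_null
    · have := hInt_ae
      rw [ae_iff] at this
      exact this
    · apply hν_ac
      have := hGoodAll
      rw [ae_iff] at this
      exact this
  · intro t ht
    rw [hN_def, mem_setOf_eq, not_not] at ht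
    obtain ⟨hA, hGt⟩ := ht
    set κt : Kernel E (EuclideanSpace ℝ (Fin d)) :=
      κ.comap (fun e => (t, e)) measurable_prodMk_left with hκt_def
    haveI : IsMarkovKernel κt := by rw [hκt_def]; infer_instance
    haveI hP1 : IsProbabilityMeasure (P.map (Z t)) :=
      Measure.isProbabilityMeasure_map (hZt t).aemeasurable
    haveI hP2 : IsProbabilityMeasure (P.map (fun ω => (Z t ω, Γ t ω))) :=
      Measure.isProbabilityMeasure_map ((hZt t).prodMk (hΓt t)).aemeasurable
    have hmap_eq : P.map (fun ω => (Z t ω, Γ t ω)) = (P.map (Z t)) ⊗ₘ κt := by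
      have hspanE : IsCountablySpanning πE := ⟨fun _ => univ, fun _ => hπE_univ, iUnion_const univ⟩
      have hspanR : IsCountablySpanning πR := ⟨fun _ => univ, fun _ => hπR_univ, iUnion_const univ⟩
      apply ext_of_generate_finite (image2 (· ×ˢ ·) πE πR)
      · exact (generateFrom_eq_prod hπE_gen hπR_gen hspanE hspanR).symm
      · exact hπE_pi.prod hπR_pi
      · rintro _ ⟨s, hs, B, hB, rfl⟩
        rw [Measure.map_apply ((hZt t).prodMk (hΓt t)) ((hπE_meas s hs).prod (hπR_meas B hB))]
        rw [Measure.compProd_apply_prod (hπE_meas s hs) (hπR_meas B hB)]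
        rw [mk_preimage_prod]
        rw [setLIntegral_map (hπE_meas s hs) (Kernel.measurable_coe κt (hπR_meas B hB)) (hZt t)]
        simp only [hκt_def, Kernel.comap_apply]
        exact hGt s hs B hB
      · simp [measure_univ]
    have hae_kernel : ∀ᵐ e ∂(P.map (Z t)), κt e = condDistrib (Γ t) (Z t) P e :=
      (condDistrib_ae_eq_of_measure_eq_compProd_of_measurable (hZt t) (hΓt t) (κ := κt) hmap_eq).symm
    have hae1 : ∀ᵐ ω ∂P, κ (t, Z t ω) = condDistrib (Γ t) (Z t) P (Z t ω) := by
      have h3 := ae_of_ae_map (hZt t).aemeasurable hae_kernel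
      filter_upwards [h3] with ω hω
      rw [← hω, hκt_def, Kernel.comap_apply]
    have hnull : ∀ᵐ ω ∂P, (condDistrib (Γ t) (Z t) P (Z t ω)) Kᶜ = 0 := by
      have hpre : (Γ t) ⁻¹' Kᶜ = (∅ : Set Ω) := by
        ext ω; simp [hΓK t ω]
      have h4 := condDistrib_ae_eq_condExp (μ := P) (hZt t) (hΓt t)
        hKclosed.measurableSet.compl
      rw [hpre] at h4
      simp only [Set.indicator_empty] at h4
      rw [show (fun _ : Ω => (0:ℝ)) = (0 : Ω → ℝ) from rfl, condExp_zero] at h4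
      filter_upwards [h4] with ω hω
      rw [Pi.zero_apply] at hω
      have hne : (condDistrib (Γ t) (Z t) P (Z t ω)) Kᶜ ≠ ⊤ := measure_ne_top _ _
      rcases (ENNReal.toReal_eq_zero_iff _).1 hω with h | h
      · exact h
      · exact absurd h hne
    have hint_id : ∀ᵐ ω ∂P, Integrable (fun y => y) (condDistrib (Γ t) (Z t) P (Z t ω)) := by
      have h5 : Integrable (fun p : E × EuclideanSpace ℝ (Fin d) => p.2)
          (P.map (fun ω => (Z t ω, Γ t ω))) := by
        rw [integrable_map_measure measurable_snd.aestronglyMeasurable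
          ((hZt t).prodMk (hΓt t)).aemeasurable]
        exact hA
      exact MeasureTheory.Integrable.condDistrib_ae
        (hZt t).aemeasurable (hΓt t).aemeasurable h5
    have hcond := condExp_ae_eq_integral_condDistrib' (μ := P) (hZt t) hA
    filter_upwards [hae1, hnull, hint_id, hcond] with ω h1' h2' h3' h4'
    have hvv : v (t, Z t ω) = ∫ y, y ∂(condDistrib (Γ t) (Z t) P (Z t ω)) := by
      rw [hv_def]
      simp only
      rw [h1']
    have hmem : v (t, Z t ω) ∈ K := by
      rw [hvv]
      haveI : IsProbabilityMeasure (condDistrib (Γ t) (Z t) P (Z t ω)) := inferInstance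
      refine hKconv.integral_mem hKclosed ?_ h3'
      rw [ae_iff]
      exact h2'
    rw [if_pos hmem, hvv]
    exact h4'.symm

end Mimic
end
end

section
/- Let (Ω', F', Q') be a probability space supporting a jointly measurable ℝ^d-valued process a with E^{Q'} ∫_0^t ‖a_s‖ ds < ∞ for all t ≥ 0. Set Ω := [0,1] × Ω' with generic point ω = (u, ω'), U(u,ω') := u, F := B[0,1] ⊗ F', Q := λ_{[0,1]} × Q' (λ_{[0,1]} being Lebesgue measure on [0,1]), and extend a to Ω by a(u,ω') := a(ω'). Define the random times T_0^n := 0, T_i^n := (U + i − 1)/n for i = 1, …, n², and T_{n²+1}^n := ∞, and the sampled process a_t^n(ω) := Σ_{i=1}^{n²} a_{T_i^n(ω)}(ω) 1_{[T_i^n(ω), T_{i+1}^n(ω))}(t). Then lim_{n→∞} E^Q ∫_0^t ‖a_s − a_s^n‖ ds = 0 for every t ≥ 0. -/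
open MeasureTheory Filter Set
open scoped ENNReal NNReal Topology

noncomputable section

namespace Mimic

/-- The sampled process
`a^n_t(u,ω') = ∑_{i=1}^{n²} a_{(u+i−1)/n}(ω') 1_{[T_i^n, T_{i+1}^n)}(t)`,
where `T_i^n = (u+i−1)/n` for `1 ≤ i ≤ n²` and `T_{n²+1}^n = ∞`. -/
def sampledProc {Ω' : Type*} {V : Type*} [NormedAddCommGroup V]
    (a : ℝ → Ω' → V) (n : ℕ) (t : ℝ) (ω : ℝ × Ω') : V :=
  ∑ i ∈ Finset.Icc 1 (n ^ 2),
    Set.indicator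
      {s : ℝ | (ω.1 + i - 1) / n ≤ s ∧ (i < n ^ 2 → s < (ω.1 + i) / n)}
      (fun _ => a ((ω.1 + i - 1) / n) ω.2) t

/-! ### Auxiliary lemmas -/

/-- Translation continuity (in `L¹`-sense) for continuous compactly supported functions. -/
private lemma tendsto_shift_cts {E : Type*} [NormedAddCommGroup E]
    (φ : ℝ → E) (hc : Continuous φ) (hsupp : HasCompactSupport φ)
    {h : ℕ → ℝ} (hh : Tendsto h atTop (𝓝 0)) :
    Tendsto (fun n => ∫⁻ s : ℝ, edist (φ (s - h n)) (φ s)) atTop (𝓝 0) := by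
  obtain ⟨C, hC⟩ := hsupp.exists_bound_of_continuous hc
  set K : Set ℝ := Metric.cthickening 1 (tsupport φ) with hK
  have hKc : IsCompact K := hsupp.cthickening
  have hbound_int : ∫⁻ s, K.indicator (fun _ => ENNReal.ofReal (2 * C)) s ∂volume ≠ ⊤ := by
    rw [lintegral_indicator hKc.measurableSet]
    simp only [MeasureTheory.lintegral_const, Measure.restrict_apply MeasurableSet.univ,
      univ_inter]
    exact (ENNReal.mul_lt_top ENNReal.ofReal_lt_top hKc.measure_lt_top).ne
  have key := tendsto_lintegral_filter_of_dominated_convergence (μ := volume) (l := atTop)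
    (F := fun n (s : ℝ) => edist (φ (s - h n)) (φ s)) (f := fun _ => (0 : ℝ≥0∞))
    (K.indicator (fun _ => ENNReal.ofReal (2 * C))) ?_ ?_ hbound_int ?_
  · simpa using key
  · refine Eventually.of_forall fun n => ?_
    exact ((hc.comp (continuous_id.sub continuous_const)).edist hc).measurable
  · have habs : ∀ᶠ n in atTop, |h n| ≤ 1 := by
      have := hh.abs
      simp only [abs_zero] at this
      exact this.eventually (ge_mem_nhds one_pos)
    filter_upwards [habs] with n hn
    refine Eventually.of_forall fun s => ?_
    by_cases hmem : s ∈ K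
    · rw [Set.indicator_of_mem hmem]
      have h1 : dist (φ (s - h n)) (φ s) ≤ 2 * C := by
        rw [dist_eq_norm]
        calc ‖φ (s - h n) - φ s‖ ≤ ‖φ (s - h n)‖ + ‖φ s‖ := norm_sub_le _ _
          _ ≤ C + C := add_le_add (hC _) (hC _)
          _ = 2 * C := by ring
      rw [edist_dist]
      exact ENNReal.ofReal_le_ofReal h1
    · rw [Set.indicator_of_notMem hmem]
      have h2 : φ s = 0 := by
        by_contra h2
        exact hmem (Metric.self_subset_cthickening _ (subset_tsupport φ (by simp [h2])))
      have h3 : φ (s - h n) = 0 := by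
        by_contra h3
        apply hmem
        have hmemsup : s - h n ∈ tsupport φ := subset_tsupport φ h3
        refine Metric.mem_cthickening_of_dist_le s (s - h n) 1 (tsupport φ) hmemsup ?_
        rw [Real.dist_eq]
        simpa using hn
      simp [h2, h3]
  · refine Eventually.of_forall fun s => ?_
    have h1 : Tendsto (fun n => φ (s - h n)) atTop (𝓝 (φ (s - 0))) :=
      (hc.tendsto _).comp (tendsto_const_nhds.sub hh)
    rw [sub_zero] at h1
    have h2 : Tendsto (fun n => edist (φ (s - h n)) (φ s)) atTop (𝓝 (edist (φ s) (φ s))) :=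
      (continuous_edist.tendsto _).comp (h1.prodMk_nhds tendsto_const_nhds)
    simpa using h2

/-- Translation continuity in `L¹` for integrable functions on `ℝ`. -/
private lemma tendsto_shift_L1 {E : Type*} [NormedAddCommGroup E] [NormedSpace ℝ E]
    [MeasurableSpace E] [BorelSpace E] [SecondCountableTopology E]
    (f : ℝ → E) (hm : Measurable f) (hfi : (∫⁻ s : ℝ, (‖f s‖₊ : ℝ≥0∞)) < ⊤)
    {h : ℕ → ℝ} (hh : Tendsto h atTop (𝓝 0)) :
    Tendsto (fun n => ∫⁻ s : ℝ, edist (f (s - h n)) (f s)) atTop (𝓝 0) := by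
  rw [ENNReal.tendsto_nhds_zero]
  intro ε hε
  have hint : Integrable f volume := ⟨hm.aestronglyMeasurable, hfi⟩
  have hq : ε / 2 / 2 ≠ 0 :=
    (ENNReal.div_pos (ENNReal.div_pos hε.ne' (by norm_num)).ne' (by norm_num)).ne'
  obtain ⟨φ, hφsupp, hφle, hφc, hφint⟩ := hint.exists_hasCompactSupport_lintegral_sub_le hq
  have hmid := tendsto_shift_cts φ hφc hφsupp hh
  rw [ENNReal.tendsto_nhds_zero] at hmid
  have hεhalf : (0:ℝ≥0∞) < ε / 2 := ENNReal.div_pos hε.ne' (by norm_num)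
  filter_upwards [hmid (ε / 2) hεhalf] with n hn
  have hφm : Measurable φ := hφc.measurable
  have hshiftm : Measurable fun s : ℝ => s - h n := measurable_id.sub measurable_const
  have htri : ∀ s : ℝ, edist (f (s - h n)) (f s) ≤
      edist (f (s - h n)) (φ (s - h n)) + edist (φ (s - h n)) (φ s) + edist (φ s) (f s) :=
    fun s => edist_triangle4 _ _ _ _
  have hB : Measurable fun s : ℝ => edist (φ (s - h n)) (φ s) :=
    (hφm.comp hshiftm).edist hφm
  have hC' : Measurable fun s : ℝ => edist (φ s) (f s) := hφm.edist hm
  calc ∫⁻ s : ℝ, edist (f (s - h n)) (f s)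
      ≤ ∫⁻ s : ℝ, (edist (f (s - h n)) (φ (s - h n)) + edist (φ (s - h n)) (φ s)
          + edist (φ s) (f s)) := lintegral_mono htri
    _ = (∫⁻ s : ℝ, edist (f (s - h n)) (φ (s - h n)))
          + (∫⁻ s : ℝ, edist (φ (s - h n)) (φ s)) + ∫⁻ s : ℝ, edist (φ s) (f s) := by
        rw [lintegral_add_right _ hC', lintegral_add_right _ hB]
    _ ≤ ε / 2 / 2 + ε / 2 + ε / 2 / 2 := by
        have e1 : ∫⁻ s : ℝ, edist (f (s - h n)) (φ (s - h n)) ≤ ε / 2 / 2 := by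
          have hinv := lintegral_sub_right_eq_self (μ := volume)
            (fun x : ℝ => edist (f x) (φ x)) (h n)
          calc ∫⁻ s : ℝ, edist (f (s - h n)) (φ (s - h n))
              = ∫⁻ x : ℝ, edist (f x) (φ x) := hinv
            _ = ∫⁻ x : ℝ, (‖f x - φ x‖₊ : ℝ≥0∞) := by
                simp only [edist_eq_enorm_sub, enorm_eq_nnnorm]
            _ ≤ ε / 2 / 2 := hφle
        have e3 : ∫⁻ s : ℝ, edist (φ s) (f s) ≤ ε / 2 / 2 := by
          calc ∫⁻ s : ℝ, edist (φ s) (f s) = ∫⁻ x : ℝ, (‖f x - φ x‖₊ : ℝ≥0∞) := by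
                simp only [edist_comm (φ _), edist_eq_enorm_sub, enorm_eq_nnnorm]
            _ ≤ ε / 2 / 2 := hφle
        exact add_le_add (add_le_add e1 hn) e3
    _ = ε := by
        rw [add_right_comm, ENNReal.add_halves, ENNReal.add_halves]

/-- Change of variables `u ↦ Int.fract (c - u)` on `[0,1]`. -/
private lemma lintegral_fract_shift (H : ℝ → ℝ≥0∞) (hH : Measurable H) (c : ℝ) :
    ∫⁻ u in Icc (0:ℝ) 1, H (Int.fract (c - u)) = ∫⁻ v in Icc (0:ℝ) 1, H v := by
  have h₀ : (0:ℝ) ≤ Int.fract c := Int.fract_nonneg c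
  have h₁ : Int.fract c < 1 := Int.fract_lt_one c
  set c' : ℝ := Int.fract c with hc'
  have hfl : c' = c - ⌊c⌋ := Int.self_sub_floor c ▸ rfl
  rw [← setLIntegral_congr (Ico_ae_eq_Icc (μ := volume) (a := (0:ℝ)) (b := 1)),
      ← setLIntegral_congr (Ico_ae_eq_Icc (μ := volume) (a := (0:ℝ)) (b := 1))]
  have hsplit : Ico (0:ℝ) 1 = Icc 0 c' ∪ Ioo c' 1 := by
    ext x
    simp only [mem_Ico, mem_Icc, mem_Ioo, mem_union]
    constructor
    · rintro ⟨hx0, hx1⟩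
      rcases le_or_gt x c' with hx | hx
      · exact Or.inl ⟨hx0, hx⟩
      · exact Or.inr ⟨hx, hx1⟩
    · rintro (⟨hx0, hx⟩ | ⟨hx, hx1⟩)
      · exact ⟨hx0, hx.trans_lt h₁⟩
      · exact ⟨h₀.trans hx.le, hx1⟩
  have hdisj : Disjoint (Icc (0:ℝ) c') (Ioo c' 1) := by
    rw [Set.disjoint_left]
    rintro x ⟨-, hx⟩ ⟨hx', -⟩
    exact absurd hx (not_le.2 hx')
  rw [hsplit, lintegral_union measurableSet_Ioo hdisj, lintegral_union measurableSet_Ioo hdisj]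
  congr 1
  · -- on `Icc 0 c'`, `fract (c - u) = c' - u`
    have he : ∀ u ∈ Icc (0:ℝ) c', Int.fract (c - u) = c' - u := by
      intro u hu
      have h2 : c - u = (c' - u) + (⌊c⌋ : ℝ) := by rw [hfl]; ring
      rw [h2, Int.fract_add_intCast, Int.fract_eq_self.2 ⟨by linarith [hu.2], by linarith [hu.1]⟩]
    rw [setLIntegral_congr_fun_ae measurableSet_Icc
      (Eventually.of_forall fun u hu => by rw [he u hu])]
    have hmp : MeasurePreserving (fun x : ℝ => c' - x) volume volume :=
      Measure.measurePreserving_sub_left volume c'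
    have hpre : (fun x : ℝ => c' - x) ⁻¹' (Icc 0 c') = Icc 0 c' := by
      ext x
      simp only [mem_preimage, mem_Icc]
      constructor <;> rintro ⟨ha, hb⟩ <;> constructor <;> linarith
    calc ∫⁻ u in Icc (0:ℝ) c', H (c' - u)
        = ∫⁻ u in (fun x : ℝ => c' - x) ⁻¹' (Icc 0 c'), H ((fun x : ℝ => c' - x) u) := by
          rw [hpre]
      _ = ∫⁻ v in Icc (0:ℝ) c', H v :=
          hmp.setLIntegral_comp_preimage measurableSet_Icc hH
  · -- on `Ioo c' 1`, `fract (c - u) = c' + 1 - u`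
    have he : ∀ u ∈ Ioo (c' : ℝ) 1, Int.fract (c - u) = c' + 1 - u := by
      intro u hu
      have h2 : c - u = (c' + 1 - u) + ((⌊c⌋ - 1 : ℤ) : ℝ) := by
        push_cast
        rw [hfl]; ring
      rw [h2, Int.fract_add_intCast, Int.fract_eq_self.2 ⟨by linarith [hu.2], by linarith [hu.1]⟩]
    rw [setLIntegral_congr_fun_ae measurableSet_Ioo
      (Eventually.of_forall fun u hu => by rw [he u hu])]
    have hmp : MeasurePreserving (fun x : ℝ => c' + 1 - x) volume volume :=
      Measure.measurePreserving_sub_left volume (c' + 1)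
    have hpre : (fun x : ℝ => c' + 1 - x) ⁻¹' (Ioo c' 1) = Ioo c' 1 := by
      ext x
      simp only [mem_preimage, mem_Ioo]
      constructor <;> rintro ⟨ha, hb⟩ <;> constructor <;> linarith
    calc ∫⁻ u in Ioo (c' : ℝ) 1, H (c' + 1 - u)
        = ∫⁻ u in (fun x : ℝ => c' + 1 - x) ⁻¹' (Ioo c' 1), H ((fun x : ℝ => c' + 1 - x) u) := by
          rw [hpre]
      _ = ∫⁻ v in Ioo (c' : ℝ) 1, H v :=
          hmp.setLIntegral_comp_preimage measurableSet_Ioo hH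

/-- Explicit formula for the sampled process. -/
private lemma sampledProc_eq {Ω' : Type*} {V : Type*} [NormedAddCommGroup V]
    (a : ℝ → Ω' → V) {t s u : ℝ} (n : ℕ) (hn : t + 1 ≤ (n : ℝ))
    (hs0 : 0 ≤ s) (hst : s ≤ t) (hu0 : 0 ≤ u) (ω' : Ω') :
    sampledProc a n s (u, ω') =
      if u ≤ n * s then a ((u + ⌊n * s - u⌋) / n) ω' else 0 := by
  have ht0 : 0 ≤ t := hs0.trans hst
  have hn1 : (1:ℝ) ≤ n := by linarith
  have hn0 : (0:ℝ) < n := by linarith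
  unfold sampledProc
  split_ifs with hcase
  · set k : ℤ := ⌊n * s - u⌋ with hk
    have hk0 : 0 ≤ k := Int.floor_nonneg.2 (by linarith)
    have hkle : (k:ℝ) ≤ n * s - u := Int.floor_le _
    have hklt : n * s - u < (k:ℝ) + 1 := Int.lt_floor_add_one _
    set i₀ : ℕ := k.toNat + 1 with hi₀
    have htoNat : ((k.toNat : ℕ) : ℝ) = (k : ℝ) := by exact_mod_cast Int.toNat_of_nonneg hk0
    have hcast : (i₀ : ℝ) = (k : ℝ) + 1 := by
      rw [hi₀]
      push_cast
      rw [htoNat]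
    have hmem : i₀ ∈ Finset.Icc 1 (n ^ 2) := by
      refine Finset.mem_Icc.2 ⟨Nat.le_add_left 1 _, ?_⟩
      have hreal : (i₀ : ℝ) ≤ ((n ^ 2 : ℕ) : ℝ) := by
        rw [hcast]
        push_cast
        nlinarith [mul_le_mul_of_nonneg_left (show s ≤ (n:ℝ) - 1 by linarith) hn0.le]
      exact_mod_cast hreal
    rw [Finset.sum_eq_single_of_mem i₀ hmem ?_]
    · have hmem' : s ∈ {s' : ℝ | ((u, ω').1 + (i₀:ℝ) - 1) / n ≤ s' ∧
          (i₀ < n ^ 2 → s' < ((u, ω').1 + (i₀:ℝ)) / n)} := by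
        constructor
        · rw [div_le_iff₀ hn0, hcast]
          linarith [mul_comm s (n:ℝ) ▸ hkle]
        · intro _
          rw [lt_div_iff₀ hn0, hcast]
          nlinarith [hklt]
      rw [Set.indicator_of_mem hmem']
      congr 2
      rw [hcast]
      ring
    · intro i hi hne
      rcases Finset.mem_Icc.1 hi with ⟨hi1, hi2⟩
      apply Set.indicator_of_notMem
      rintro ⟨hA, hB⟩
      have hA' : (u + (i:ℝ) - 1) / n ≤ s := hA
      rw [div_le_iff₀ hn0] at hA'
      have hilt : (i:ℝ) < (k:ℝ) + 2 := by nlinarith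
      have hile : i ≤ i₀ := by
        have h5 : (i:ℝ) < (i₀:ℝ) + 1 := by rw [hcast]; linarith
        exact_mod_cast Nat.lt_succ_iff.1 (by exact_mod_cast h5)
      have hlt : i < i₀ := lt_of_le_of_ne hile hne
      have hik : (i:ℝ) ≤ (k:ℝ) := by
        have h6 : i ≤ k.toNat := Nat.lt_succ_iff.1 hlt
        calc (i:ℝ) ≤ (k.toNat:ℝ) := by exact_mod_cast h6
          _ = (k:ℝ) := htoNat
      have hi_lt : i < n ^ 2 := lt_of_lt_of_le hlt (Finset.mem_Icc.1 hmem).2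
      have hBs : s < (u + (i:ℝ)) / n := hB hi_lt
      rw [lt_div_iff₀ hn0] at hBs
      nlinarith
  · apply Finset.sum_eq_zero
    intro i hi
    rcases Finset.mem_Icc.1 hi with ⟨hi1, -⟩
    apply Set.indicator_of_notMem
    rintro ⟨hA, -⟩
    rw [div_le_iff₀ hn0] at hA
    push_neg at hcase
    have h1i : (1:ℝ) ≤ (i:ℝ) := by exact_mod_cast hi1
    nlinarith


/-- Pointwise identity between the sampling error and the time-shift error. -/
private lemma nnnorm_sub_sampledProc {Ω' : Type*} {V : Type*} [NormedAddCommGroup V]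
    (a : ℝ → Ω' → V) {t s u : ℝ} (n : ℕ) (hn : t + 1 ≤ (n : ℝ))
    (hs : s ∈ Icc (0:ℝ) t) (hu : u ∈ Ico (0:ℝ) 1) (ω' : Ω') :
    (‖a s ω' - sampledProc a n s (u, ω')‖₊ : ℝ≥0∞) =
      if Int.fract ((n:ℝ) * s - u) / n ≤ s
      then (‖a s ω' - a (s - Int.fract ((n:ℝ) * s - u) / n) ω'‖₊ : ℝ≥0∞)
      else (‖a s ω'‖₊ : ℝ≥0∞) := by
  obtain ⟨hs0, hst⟩ := hs
  obtain ⟨hu0, hu1⟩ := hu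
  have hn0 : (0:ℝ) < n := by linarith
  rw [sampledProc_eq a n hn hs0 hst hu0 ω']
  rcases le_or_gt u ((n:ℝ) * s) with hcase | hcase
  · rw [if_pos hcase]
    have hfr : Int.fract ((n:ℝ) * s - u) = (n:ℝ) * s - u - ⌊(n:ℝ) * s - u⌋ :=
      (Int.self_sub_floor _).symm
    have hflnn : (0:ℝ) ≤ (⌊(n:ℝ) * s - u⌋ : ℝ) := by
      exact_mod_cast Int.floor_nonneg.2 (show (0:ℝ) ≤ (n:ℝ) * s - u by linarith)
    have hcond : Int.fract ((n:ℝ) * s - u) / n ≤ s := by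
      rw [div_le_iff₀ hn0, hfr]
      nlinarith
    have harg : s - Int.fract ((n:ℝ) * s - u) / n = (u + ⌊(n:ℝ) * s - u⌋) / n := by
      rw [hfr]
      field_simp
      ring
    rw [if_pos hcond, harg]
  · rw [if_neg (not_le.2 hcase)]
    have hns0 : (0:ℝ) ≤ (n:ℝ) * s := mul_nonneg hn0.le hs0
    have hfl : ⌊(n:ℝ) * s - u⌋ = -1 := by
      apply Int.floor_eq_iff.2
      constructor
      · push_cast
        linarith
      · push_cast
        linarith
    have hfr : Int.fract ((n:ℝ) * s - u) = (n:ℝ) * s - u + 1 := by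
      rw [← Int.self_sub_floor, hfl]
      push_cast
      ring
    have hcond : ¬ (Int.fract ((n:ℝ) * s - u) / n ≤ s) := by
      rw [div_le_iff₀ hn0, hfr]
      intro hcon
      nlinarith
    rw [if_neg hcond, sub_zero]

/-- Joint measurability of the sampled process. -/
private lemma measurable_sampledProc {Ω' : Type*} [MeasurableSpace Ω'] {d : ℕ}
    {a : ℝ → Ω' → EuclideanSpace ℝ (Fin d)} (ha : Measurable (Function.uncurry a)) (n : ℕ) :
    Measurable (fun q : ℝ × (ℝ × Ω') => sampledProc a n q.1 q.2) := by
  unfold sampledProc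
  refine Finset.measurable_sum _ fun i _ => ?_
  have hval : Measurable fun q : ℝ × (ℝ × Ω') => a ((q.2.1 + i - 1) / n) q.2.2 :=
    ha.comp ((((measurable_snd.fst.add_const _).sub_const _).div_const _).prodMk
      measurable_snd.snd)
  have hset : MeasurableSet {q : ℝ × (ℝ × Ω') |
      (q.2.1 + i - 1) / n ≤ q.1 ∧ (i < n ^ 2 → q.1 < (q.2.1 + i) / n)} := by
    by_cases hi : i < n ^ 2
    · simp only [hi, true_implies]
      exact (measurableSet_le (((measurable_snd.fst.add_const _).sub_const _).div_const _)
          measurable_fst).inter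
        (measurableSet_lt measurable_fst ((measurable_snd.fst.add_const _).div_const _))
    · simp only [hi, false_implies, and_true]
      exact measurableSet_le (((measurable_snd.fst.add_const _).sub_const _).div_const _)
        measurable_fst
  simp only [Set.indicator_apply]
  exact Measurable.ite hset hval measurable_const

/-- **Proposition.** Let `a` be a jointly measurable `ℝ^d`-valued process on
`(Ω',F',Q')` with `E^{Q'} ∫_0^t ‖a_s‖ ds < ∞` for all `t ≥ 0`.  On
`Ω = [0,1] × Ω'` with `Q = λ_{[0,1]} × Q'`, let `a^n` be the process sampled
at the random times `T_i^n = (U+i−1)/n`, `i = 1,…,n²`.  Then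
`E^Q ∫_0^t ‖a_s − a_s^n‖ ds → 0` as `n → ∞`, for every `t ≥ 0`. -/
theorem sampled_process_approximation
    {Ω' : Type} [MeasurableSpace Ω']
    (Q' : Measure Ω') [IsProbabilityMeasure Q']
    {d : ℕ} (hd : 0 < d)
    (a : ℝ → Ω' → EuclideanSpace ℝ (Fin d))
    (ha : Measurable (Function.uncurry a))
    -- `E^{Q'} ∫_0^t ‖a_s‖ ds < ∞` for all `t ≥ 0`
    (haint : ∀ t : ℝ,
      ∫⁻ ω', (∫⁻ s in Set.Icc (0 : ℝ) t, (‖a s ω'‖₊ : ℝ≥0∞)) ∂Q' < ⊤) :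
    ∀ t : ℝ, 0 ≤ t →
      Tendsto (fun n : ℕ =>
          ∫⁻ ω, (∫⁻ s in Set.Icc (0 : ℝ) t,
              (‖a s ω.2 - sampledProc a n s ω‖₊ : ℝ≥0∞))
            ∂(((volume : Measure ℝ).restrict (Set.Icc (0 : ℝ) 1)).prod Q'))
        atTop (𝓝 0) := by
  intro t ht
  classical
  set D : ℝ → ℝ → Ω' → ℝ≥0∞ := fun h s ω' =>
    if h ≤ s then (‖a s ω' - a (s - h) ω'‖₊ : ℝ≥0∞) else (‖a s ω'‖₊ : ℝ≥0∞) with hDdef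
  -- joint measurability of `D`
  have hDm : Measurable (fun p : (ℝ × ℝ) × Ω' => D p.1.1 p.1.2 p.2) := by
    rw [hDdef]
    apply Measurable.ite
    · exact measurableSet_le measurable_fst.fst measurable_fst.snd
    · exact ((ha.comp (measurable_fst.snd.prodMk measurable_snd)).sub
        (ha.comp ((measurable_fst.snd.sub
          measurable_fst.fst).prodMk measurable_snd))).nnnorm.coe_nnreal_ennreal
    · exact (ha.comp (measurable_fst.snd.prodMk measurable_snd)).nnnorm.coe_nnreal_ennreal
  -- the error kernel
  set K : ℝ → ℝ≥0∞ := fun h => ∫⁻ ω', (∫⁻ s in Icc (0:ℝ) t, D h s ω') ∂Q' with hKdef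
  -- measurability helpers
  have hAm : Measurable (fun ω' => ∫⁻ s in Icc (0:ℝ) t, (‖a s ω'‖₊ : ℝ≥0∞)) := by
    apply Measurable.lintegral_prod_right'
      (f := fun p : Ω' × ℝ => (‖a p.2 p.1‖₊ : ℝ≥0∞))
    exact (ha.comp (measurable_snd.prodMk measurable_fst)).nnnorm.coe_nnreal_ennreal
  have hWm : ∀ h : ℝ, Measurable (fun ω' => ∫⁻ s in Icc (0:ℝ) t, D h s ω') := by
    intro h
    apply Measurable.lintegral_prod_right' (f := fun p : Ω' × ℝ => D h p.2 p.1)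
    exact hDm.comp ((measurable_const.prodMk measurable_snd).prodMk measurable_fst)
  have hK2 : Measurable (fun p : ℝ × Ω' => ∫⁻ s in Icc (0:ℝ) t, D p.1 s p.2) := by
    apply Measurable.lintegral_prod_right' (f := fun q : (ℝ × Ω') × ℝ => D q.1.1 q.2 q.1.2)
    exact hDm.comp ((measurable_fst.fst.prodMk measurable_snd).prodMk measurable_fst.snd)
  have hKm : Measurable K := by
    rw [hKdef]
    exact hK2.lintegral_prod_right'
  -- uniform bound for the kernel
  have hWbound : ∀ h : ℝ, 0 ≤ h → ∀ ω',
      (∫⁻ s in Icc (0:ℝ) t, D h s ω') ≤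
        2 * ∫⁻ s in Icc (0:ℝ) t, (‖a s ω'‖₊ : ℝ≥0∞) := by
    intro h h0 ω'
    have hma : Measurable fun s : ℝ => (‖a s ω'‖₊ : ℝ≥0∞) :=
      (ha.comp (measurable_id.prodMk measurable_const)).nnnorm.coe_nnreal_ennreal
    have hpt : ∀ s ∈ Icc (0:ℝ) t, D h s ω' ≤ (‖a s ω'‖₊ : ℝ≥0∞) +
        (Icc h t).indicator (fun r => (‖a (r - h) ω'‖₊ : ℝ≥0∞)) s := by
      intro s hs
      by_cases hc : h ≤ s
      · have hmem : s ∈ Icc h t := ⟨hc, hs.2⟩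
        have hDeq : D h s ω' = (‖a s ω' - a (s - h) ω'‖₊ : ℝ≥0∞) := if_pos hc
        rw [hDeq, Set.indicator_of_mem hmem]
        calc (‖a s ω' - a (s - h) ω'‖₊ : ℝ≥0∞)
            ≤ (‖a s ω'‖₊ : ℝ≥0∞) + (‖a (s - h) ω'‖₊ : ℝ≥0∞) := by
              rw [← ENNReal.coe_add]
              exact ENNReal.coe_le_coe.2 (nnnorm_sub_le _ _)
          _ = _ := rfl
      · have hDeq : D h s ω' = (‖a s ω'‖₊ : ℝ≥0∞) := if_neg hc
        rw [hDeq]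
        exact self_le_add_right _ _
    calc (∫⁻ s in Icc (0:ℝ) t, D h s ω')
        ≤ ∫⁻ s in Icc (0:ℝ) t, ((‖a s ω'‖₊ : ℝ≥0∞) +
            (Icc h t).indicator (fun r => (‖a (r - h) ω'‖₊ : ℝ≥0∞)) s) :=
          setLIntegral_mono' measurableSet_Icc hpt
      _ = (∫⁻ s in Icc (0:ℝ) t, (‖a s ω'‖₊ : ℝ≥0∞)) +
            ∫⁻ s in Icc (0:ℝ) t,
              (Icc h t).indicator (fun r => (‖a (r - h) ω'‖₊ : ℝ≥0∞)) s :=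
          lintegral_add_left hma _
      _ ≤ (∫⁻ s in Icc (0:ℝ) t, (‖a s ω'‖₊ : ℝ≥0∞)) +
            ∫⁻ s in Icc (0:ℝ) t, (‖a s ω'‖₊ : ℝ≥0∞) := by
          refine add_le_add_right ?_ _
          calc (∫⁻ s in Icc (0:ℝ) t,
              (Icc h t).indicator (fun r => (‖a (r - h) ω'‖₊ : ℝ≥0∞)) s)
              ≤ ∫⁻ s, (Icc h t).indicator (fun r => (‖a (r - h) ω'‖₊ : ℝ≥0∞)) s :=
                setLIntegral_le_lintegral _ _
            _ = ∫⁻ s in Icc h t, (‖a (s - h) ω'‖₊ : ℝ≥0∞) :=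
                lintegral_indicator measurableSet_Icc _
            _ = ∫⁻ r in Icc (0:ℝ) (t - h), (‖a r ω'‖₊ : ℝ≥0∞) := by
                have hpre : (fun x : ℝ => x - h) ⁻¹' (Icc 0 (t - h)) = Icc h t := by
                  ext x
                  simp only [mem_preimage, mem_Icc]
                  constructor <;> rintro ⟨h1, h2⟩ <;> constructor <;> linarith
                rw [← hpre]
                exact (measurePreserving_sub_right volume h).setLIntegral_comp_preimage
                  measurableSet_Icc hma
            _ ≤ ∫⁻ s in Icc (0:ℝ) t, (‖a s ω'‖₊ : ℝ≥0∞) :=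
                lintegral_mono_set (Icc_subset_Icc le_rfl (by linarith))
      _ = 2 * ∫⁻ s in Icc (0:ℝ) t, (‖a s ω'‖₊ : ℝ≥0∞) := (two_mul _).symm
  have hKbound : ∀ h : ℝ, 0 ≤ h → K h ≤
      2 * ∫⁻ ω', (∫⁻ s in Icc (0:ℝ) t, (‖a s ω'‖₊ : ℝ≥0∞)) ∂Q' := by
    intro h h0
    rw [hKdef, ← lintegral_const_mul 2 hAm]
    exact lintegral_mono (hWbound h h0)
  -- the core convergence result for the kernel
  have hcore : ∀ hseq : ℕ → ℝ, (∀ m, 0 ≤ hseq m) → Tendsto hseq atTop (𝓝 0) →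
      Tendsto (fun m => K (hseq m)) atTop (𝓝 0) := by
    intro hseq hpos hlim
    have hbound_fin : (∫⁻ ω', 2 * (∫⁻ s in Icc (0:ℝ) t, (‖a s ω'‖₊ : ℝ≥0∞)) ∂Q') ≠ ⊤ := by
      rw [lintegral_const_mul 2 hAm]
      exact (ENNReal.mul_lt_top (by norm_num) (haint t)).ne
    have key := tendsto_lintegral_filter_of_dominated_convergence (μ := Q') (l := atTop)
      (F := fun m ω' => ∫⁻ s in Icc (0:ℝ) t, D (hseq m) s ω') (f := fun _ => 0)
      (fun ω' => 2 * ∫⁻ s in Icc (0:ℝ) t, (‖a s ω'‖₊ : ℝ≥0∞))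
      (Eventually.of_forall fun m => hWm _)
      (Eventually.of_forall fun m => Eventually.of_forall fun ω' => hWbound _ (hpos m) ω')
      hbound_fin ?_
    · simpa [hKdef] using key
    -- a.e. pointwise convergence in `ω'`
    have hae : ∀ᵐ ω' ∂Q', (∫⁻ s in Icc (0:ℝ) t, (‖a s ω'‖₊ : ℝ≥0∞)) < ⊤ :=
      ae_lt_top hAm (haint t).ne
    filter_upwards [hae] with ω' hfin
    have hsec : Measurable fun s : ℝ => a s ω' :=
      ha.comp (measurable_id.prodMk measurable_const)
    have hma : Measurable fun s : ℝ => (‖a s ω'‖₊ : ℝ≥0∞) := hsec.nnnorm.coe_nnreal_ennreal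
    set g : ℝ → EuclideanSpace ℝ (Fin d) := (Icc (0:ℝ) t).indicator (fun s => a s ω')
      with hgdef
    have hgm : Measurable g := hsec.indicator measurableSet_Icc
    have hgi : (∫⁻ s : ℝ, (‖g s‖₊ : ℝ≥0∞)) < ⊤ := by
      have hpt : ∀ s : ℝ, (‖g s‖₊ : ℝ≥0∞) =
          (Icc (0:ℝ) t).indicator (fun s => (‖a s ω'‖₊ : ℝ≥0∞)) s := by
        intro s
        rw [hgdef]
        by_cases hmem : s ∈ Icc (0:ℝ) t <;>
          simp [Set.indicator_apply, hmem]
      calc (∫⁻ s : ℝ, (‖g s‖₊ : ℝ≥0∞))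
          = ∫⁻ s, (Icc (0:ℝ) t).indicator (fun s => (‖a s ω'‖₊ : ℝ≥0∞)) s :=
            lintegral_congr hpt
        _ = ∫⁻ s in Icc (0:ℝ) t, (‖a s ω'‖₊ : ℝ≥0∞) :=
            lintegral_indicator measurableSet_Icc _
        _ < ⊤ := hfin
    have hV := tendsto_shift_L1 g hgm hgi hlim
    have hR : Tendsto (fun m => ∫⁻ s in Icc (0:ℝ) t,
        (Iio (hseq m)).indicator (fun r => (‖a r ω'‖₊ : ℝ≥0∞)) s) atTop (𝓝 0) := by
      have key2 := tendsto_lintegral_filter_of_dominated_convergence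
        (μ := volume.restrict (Icc (0:ℝ) t)) (l := atTop)
        (F := fun m s => (Iio (hseq m)).indicator (fun r => (‖a r ω'‖₊ : ℝ≥0∞)) s)
        (f := fun _ => 0) (fun s => (‖a s ω'‖₊ : ℝ≥0∞))
        (Eventually.of_forall fun m => hma.indicator measurableSet_Iio)
        (Eventually.of_forall fun m => Eventually.of_forall fun s =>
          Set.indicator_le_self _ _ s)
        hfin.ne ?_
      · simpa using key2
      · have hae0 : ∀ᵐ s ∂(volume.restrict (Icc (0:ℝ) t)), s ≠ 0 := by
          refine ae_restrict_of_ae ?_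
          have : (volume : Measure ℝ) {(0:ℝ)} = 0 := measure_singleton 0
          rw [ae_iff]
          simpa [not_not] using this
        filter_upwards [hae0, ae_restrict_mem measurableSet_Icc] with s hs0 hsmem
        have hspos : 0 < s := lt_of_le_of_ne hsmem.1 (Ne.symm hs0)
        have hev : ∀ᶠ m in atTop,
            (Iio (hseq m)).indicator (fun r => (‖a r ω'‖₊ : ℝ≥0∞)) s = 0 := by
          filter_upwards [hlim.eventually (gt_mem_nhds hspos)] with m hm
          exact Set.indicator_of_notMem (by simpa using hm.le) _
        exact Tendsto.congr' (EventuallyEq.symm hev) tendsto_const_nhds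
    have hWle : ∀ m, (∫⁻ s in Icc (0:ℝ) t, D (hseq m) s ω') ≤
        (∫⁻ s : ℝ, edist (g (s - hseq m)) (g s)) +
          ∫⁻ s in Icc (0:ℝ) t,
            (Iio (hseq m)).indicator (fun r => (‖a r ω'‖₊ : ℝ≥0∞)) s := by
      intro m
      have hedm : Measurable fun s : ℝ => edist (g (s - hseq m)) (g s) :=
        (hgm.comp (measurable_id.sub measurable_const)).edist hgm
      calc (∫⁻ s in Icc (0:ℝ) t, D (hseq m) s ω')
          ≤ ∫⁻ s in Icc (0:ℝ) t, (edist (g (s - hseq m)) (g s) +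
              (Iio (hseq m)).indicator (fun r => (‖a r ω'‖₊ : ℝ≥0∞)) s) := by
            refine setLIntegral_mono' measurableSet_Icc fun s hsmem => ?_
            by_cases hc : hseq m ≤ s
            · have h1 : g s = a s ω' := Set.indicator_of_mem hsmem _
              have h2 : g (s - hseq m) = a (s - hseq m) ω' :=
                Set.indicator_of_mem
                  (show s - hseq m ∈ Icc (0:ℝ) t from
                    ⟨by linarith [hsmem.1, hpos m, hc], by linarith [hsmem.2, hpos m]⟩) _
              have hDeq : D (hseq m) s ω' = (‖a s ω' - a (s - hseq m) ω'‖₊ : ℝ≥0∞) :=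
                if_pos hc
              calc D (hseq m) s ω' = edist (a s ω') (a (s - hseq m) ω') := by
                    rw [hDeq, edist_eq_enorm_sub, enorm_eq_nnnorm]
                _ = edist (g (s - hseq m)) (g s) := by rw [h1, h2, edist_comm]
                _ ≤ _ := self_le_add_right _ _
            · have hDeq : D (hseq m) s ω' = (‖a s ω'‖₊ : ℝ≥0∞) := if_neg hc
              have hind : (Iio (hseq m)).indicator (fun r => (‖a r ω'‖₊ : ℝ≥0∞)) s
                  = (‖a s ω'‖₊ : ℝ≥0∞) :=
                Set.indicator_of_mem (by simpa using not_le.1 hc) _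
              rw [hDeq, ← hind]
              exact le_add_self
        _ = (∫⁻ s in Icc (0:ℝ) t, edist (g (s - hseq m)) (g s)) +
              ∫⁻ s in Icc (0:ℝ) t,
                (Iio (hseq m)).indicator (fun r => (‖a r ω'‖₊ : ℝ≥0∞)) s :=
            lintegral_add_left hedm _
        _ ≤ _ := add_le_add_left (setLIntegral_le_lintegral _ _) _
    have hsum : Tendsto (fun m => (∫⁻ s : ℝ, edist (g (s - hseq m)) (g s)) +
        ∫⁻ s in Icc (0:ℝ) t,
          (Iio (hseq m)).indicator (fun r => (‖a r ω'‖₊ : ℝ≥0∞)) s) atTop (𝓝 0) := by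
      simpa using hV.add hR
    exact tendsto_of_tendsto_of_tendsto_of_le_of_le tendsto_const_nhds hsum
      (fun m => zero_le) hWle
  -- joint measurability of the sampling error
  have hG : ∀ n : ℕ, Measurable (fun q : ℝ × (ℝ × Ω') =>
      (‖a q.1 q.2.2 - sampledProc a n q.1 q.2‖₊ : ℝ≥0∞)) := fun n =>
    ((ha.comp (measurable_fst.prodMk measurable_snd.snd)).sub
      (measurable_sampledProc ha n)).nnnorm.coe_nnreal_ennreal
  -- the main identity
  have hEq : ∀ n : ℕ, t + 1 ≤ (n:ℝ) →
      (∫⁻ ω, (∫⁻ s in Icc (0:ℝ) t, (‖a s ω.2 - sampledProc a n s ω‖₊ : ℝ≥0∞))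
          ∂(((volume : Measure ℝ).restrict (Icc (0:ℝ) 1)).prod Q'))
        = ∫⁻ v in Icc (0:ℝ) 1, K (v / n) := by
    intro n hn
    have hn0 : (0:ℝ) < n := by linarith
    have swap1 : (∫⁻ ω, (∫⁻ s in Icc (0:ℝ) t,
          (‖a s ω.2 - sampledProc a n s ω‖₊ : ℝ≥0∞))
          ∂(((volume : Measure ℝ).restrict (Icc (0:ℝ) 1)).prod Q'))
        = ∫⁻ s in Icc (0:ℝ) t, ∫⁻ ω, (‖a s ω.2 - sampledProc a n s ω‖₊ : ℝ≥0∞)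
            ∂(((volume : Measure ℝ).restrict (Icc (0:ℝ) 1)).prod Q') :=
      lintegral_lintegral_swap
        (((hG n).comp (measurable_snd.prodMk measurable_fst)).aemeasurable)
    rw [swap1]
    have inner_eq : ∀ s ∈ Icc (0:ℝ) t,
        (∫⁻ ω, (‖a s ω.2 - sampledProc a n s ω‖₊ : ℝ≥0∞)
            ∂(((volume : Measure ℝ).restrict (Icc (0:ℝ) 1)).prod Q'))
          = ∫⁻ v in Icc (0:ℝ) 1, (∫⁻ ω', D (v / n) s ω' ∂Q') := by
      intro s hs
      have h1 : (∫⁻ ω, (‖a s ω.2 - sampledProc a n s ω‖₊ : ℝ≥0∞)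
            ∂(((volume : Measure ℝ).restrict (Icc (0:ℝ) 1)).prod Q'))
          = ∫⁻ ω', (∫⁻ u in Icc (0:ℝ) 1,
              (‖a s ω' - sampledProc a n s (u, ω')‖₊ : ℝ≥0∞)) ∂Q' :=
        lintegral_prod_symm _
          (((hG n).comp (measurable_const.prodMk measurable_id)).aemeasurable)
      rw [h1]
      have h2 : ∀ ω', (∫⁻ u in Icc (0:ℝ) 1,
            (‖a s ω' - sampledProc a n s (u, ω')‖₊ : ℝ≥0∞))
          = ∫⁻ v in Icc (0:ℝ) 1, D (v / n) s ω' := by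
        intro ω'
        have hmH : Measurable fun v : ℝ => D (v / n) s ω' :=
          hDm.comp ((((measurable_id.div_const ((n:ℝ))).prodMk
            measurable_const).prodMk measurable_const))
        have hstep : (∫⁻ u in Icc (0:ℝ) 1,
              (‖a s ω' - sampledProc a n s (u, ω')‖₊ : ℝ≥0∞))
            = ∫⁻ u in Icc (0:ℝ) 1, D (Int.fract ((n:ℝ) * s - u) / n) s ω' := by
          rw [← setLIntegral_congr (Ico_ae_eq_Icc (μ := volume) (a := (0:ℝ)) (b := 1)),
              ← setLIntegral_congr (Ico_ae_eq_Icc (μ := volume) (a := (0:ℝ)) (b := 1))]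
          refine setLIntegral_congr_fun_ae measurableSet_Ico
            (Eventually.of_forall fun u hu => ?_)
          rw [hDdef]
          exact nnnorm_sub_sampledProc a n hn hs hu ω'
        rw [hstep]
        exact lintegral_fract_shift (fun v => D (v / n) s ω') hmH ((n:ℝ) * s)
      rw [lintegral_congr h2]
      exact lintegral_lintegral_swap
        ((hDm.comp (((measurable_snd.div_const _).prodMk
          measurable_const).prodMk measurable_fst)).aemeasurable)
    rw [setLIntegral_congr_fun_ae measurableSet_Icc (Eventually.of_forall inner_eq)]
    have swap3 : (∫⁻ s in Icc (0:ℝ) t, ∫⁻ v in Icc (0:ℝ) 1, (∫⁻ ω', D (v / n) s ω' ∂Q'))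
        = ∫⁻ v in Icc (0:ℝ) 1, ∫⁻ s in Icc (0:ℝ) t, (∫⁻ ω', D (v / n) s ω' ∂Q') := by
      apply lintegral_lintegral_swap
      apply Measurable.aemeasurable
      apply Measurable.lintegral_prod_right'
        (f := fun q : (ℝ × ℝ) × Ω' => D (q.1.2 / n) q.1.1 q.2)
      exact hDm.comp (((measurable_fst.snd.div_const _).prodMk
        measurable_fst.fst).prodMk measurable_snd)
    rw [swap3]
    refine setLIntegral_congr_fun_ae measurableSet_Icc
      (Eventually.of_forall fun v _ => ?_)
    rw [hKdef]
    exact lintegral_lintegral_swap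
      (hDm.comp ((measurable_const.prodMk measurable_fst).prodMk
        measurable_snd)).aemeasurable
  -- final limit by dominated convergence in `v`
  have hfinal : Tendsto (fun n : ℕ => ∫⁻ v in Icc (0:ℝ) 1, K (v / n)) atTop (𝓝 0) := by
    have hbound_fin : (∫⁻ _v in Icc (0:ℝ) 1,
        (2 * ∫⁻ ω', (∫⁻ s in Icc (0:ℝ) t, (‖a s ω'‖₊ : ℝ≥0∞)) ∂Q')) ≠ ⊤ := by
      rw [setLIntegral_const]
      apply ENNReal.mul_ne_top
      · exact (ENNReal.mul_lt_top (by norm_num) (haint t)).ne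
      · simp [Real.volume_Icc]
    have key := tendsto_lintegral_filter_of_dominated_convergence
      (μ := volume.restrict (Icc (0:ℝ) 1)) (l := atTop)
      (F := fun (n : ℕ) (v : ℝ) => K (v / n)) (f := fun _ => 0)
      (fun _v => 2 * ∫⁻ ω', (∫⁻ s in Icc (0:ℝ) t, (‖a s ω'‖₊ : ℝ≥0∞)) ∂Q')
      (Eventually.of_forall fun n => hKm.comp (measurable_id.div_const _))
      ?_ hbound_fin ?_
    · simpa using key
    · refine Eventually.of_forall fun n => ?_
      filter_upwards [ae_restrict_mem measurableSet_Icc] with v hv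
      exact hKbound (v / n) (div_nonneg hv.1 (Nat.cast_nonneg n))
    · filter_upwards [ae_restrict_mem measurableSet_Icc] with v hv
      exact hcore (fun n => v / n) (fun n => div_nonneg hv.1 (Nat.cast_nonneg n))
        (tendsto_const_div_atTop_nhds_zero_nat v)
  refine Tendsto.congr' ?_ hfinal
  have hN : ∀ᶠ n : ℕ in atTop, t + 1 ≤ (n:ℝ) :=
    (tendsto_natCast_atTop_atTop (R := ℝ)).eventually_ge_atTop (t + 1)
  filter_upwards [hN] with n hn
  exact (hEq n hn).symm

end Mimic
end
end
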